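/- arXiv:2011.11213 — 7 statements merged into one kernel-verified Lean document; each statement's English description precedes it below -/
import Mathlib

section
/- Let (h_t)_{t∈ℝ} be a measurable measure-preserving flow on a probability space (M, μ), let f ∈ L²(M, μ) be a real-valued function, and let B > 0, β > 0, S > 0 be constants with ‖f‖₂ ≤ S. Suppose that |⟨f ∘ h_t, f⟩_{L²(μ)}| ≤ B S² |t|^{-β} for all t ∈ ℝ with |t| ≥ 1. Then for all t ≥ 1, the ergodic integral I_t f(x) = ∫₀^t f(h_r(x)) dr satisfies ‖I_t f‖₂² ≤ (4 + B) S² t^{2 - β/(1+β)}. -/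
open MeasureTheory intervalIntegral
open scoped ENNReal NNReal

/-- (Lemma 3.2 with `β₀ = β/(1+β)`.) Polynomial decay of correlations for a
measure-preserving flow yields the `L²` bound
`‖I_t f‖₂² ≤ (4 + B) S² t^{2 - β/(1+β)}` on ergodic integrals `I_t f = ∫₀^t f ∘ h_r dr`. -/
theorem ergodic_integral_L2_bound_of_poly_mixing
    {M : Type*} [MeasurableSpace M] (μ : Measure M) [IsProbabilityMeasure μ]
    (h : ℝ → M → M)
    (hmeas : ∀ t : ℝ, Measurable (h t))
    (h_zero : h 0 = id)
    (h_add : ∀ t s : ℝ, h (t + s) = h t ∘ h s)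
    (h_joint : Measurable (Function.uncurry h))
    (h_mp : ∀ t : ℝ, MeasurePreserving (h t) μ μ)
    (f : M → ℝ) (hf : MemLp f 2 μ)
    (B β S : ℝ) (hB : 0 < B) (hβ : 0 < β) (hS : 0 < S)
    (hfS : eLpNorm f 2 μ ≤ ENNReal.ofReal S)
    (hcorr : ∀ t : ℝ, 1 ≤ |t| →
      |∫ x, f (h t x) * f x ∂μ| ≤ B * S ^ 2 * |t| ^ (-β)) :
    ∀ t : ℝ, 1 ≤ t →
      (eLpNorm (fun x => ∫ r in (0:ℝ)..t, f (h r x)) 2 μ) ^ 2 ≤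
        ENNReal.ofReal ((4 + B) * S ^ 2 * t ^ (2 - β / (1 + β))) := by
  intro t ht
  have ht0 : (0:ℝ) < t := lt_of_lt_of_le one_pos ht
  have hβ1 : (0:ℝ) < 1 + β := by linarith
  -- measurable representative of f
  set f' : M → ℝ := hf.1.mk f with hf'def
  have hf'sm : StronglyMeasurable f' := hf.1.stronglyMeasurable_mk
  have hf'm : Measurable f' := hf'sm.measurable
  have hff' : f =ᵐ[μ] f' := hf.1.ae_eq_mk
  obtain ⟨N, hNsub, hNmeas, hNnull⟩ :=
    exists_measurable_superset_of_null (ae_iff.mp hff')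
  have hfN : ∀ y, y ∉ N → f y = f' y := by
    intro y hy
    by_contra hne
    exact hy (hNsub hne)
  have hmemf' : MemLp f' 2 μ := hf.ae_eq hff'
  -- composition a.e. equalities
  have hcomp_ae : ∀ u : ℝ, (fun x => f (h u x)) =ᵐ[μ] fun x => f' (h u x) := by
    intro u
    have h0 : μ (h u ⁻¹' N) = 0 := by
      rw [(h_mp u).measure_preimage hNmeas.nullMeasurableSet]; exact hNnull
    filter_upwards [measure_eq_zero_iff_ae_notMem.mp h0] with x hx
    exact hfN _ hx
  -- second moment
  set M₂ : ℝ≥0∞ := ∫⁻ x, (‖f' x‖₊ : ℝ≥0∞) ^ (2:ℕ) ∂μ with hM₂def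
  have hM₂ : M₂ ≤ ENNReal.ofReal S ^ 2 := by
    have h1 : eLpNorm f' 2 μ = (∫⁻ x, (‖f' x‖₊ : ℝ≥0∞) ^ (2:ℝ) ∂μ) ^ (1/(2:ℝ)) := by
      rw [eLpNorm_eq_lintegral_rpow_enorm_toReal two_ne_zero ENNReal.ofNat_ne_top]
      simp only [enorm_eq_nnnorm]
      norm_num
    have h2 : (∫⁻ x, (‖f' x‖₊ : ℝ≥0∞) ^ (2:ℝ) ∂μ) = M₂ := by
      rw [hM₂def]
      congr 1
      ext x
      rw [← ENNReal.rpow_natCast]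
      norm_num
    have h3 : eLpNorm f' 2 μ ≤ ENNReal.ofReal S := by
      rw [← eLpNorm_congr_ae hff']; exact hfS
    rw [h1, h2] at h3
    have h5 : (M₂ ^ (1/(2:ℝ))) ^ (2:ℝ) ≤ (ENNReal.ofReal S) ^ (2:ℝ) :=
      ENNReal.rpow_le_rpow h3 (by norm_num)
    calc M₂ = (M₂ ^ (1/(2:ℝ))) ^ (2:ℝ) := by
          rw [← ENNReal.rpow_mul]; norm_num
      _ ≤ (ENNReal.ofReal S) ^ (2:ℝ) := h5
      _ = ENNReal.ofReal S ^ 2 := by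
          rw [← ENNReal.rpow_natCast]; norm_num
  have hM₂top : M₂ < ⊤ :=
    lt_of_le_of_lt hM₂ (ENNReal.pow_lt_top ENNReal.ofReal_lt_top)
  have hcomp_sq : ∀ u : ℝ, ∫⁻ x, (‖f' (h u x)‖₊ : ℝ≥0∞) ^ (2:ℕ) ∂μ = M₂ := by
    intro u
    exact (h_mp u).lintegral_comp (hf'm.nnnorm.coe_nnreal_ennreal.pow_const 2)
  -- the correlation function
  set C : ℝ → ℝ := fun u => ∫ x, f' (h u x) * f' x ∂μ with hCdef
  have hC_eq : ∀ u, C u = ∫ x, f (h u x) * f x ∂μ := by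
    intro u
    refine integral_congr_ae ?_
    filter_upwards [hcomp_ae u, hff'] with x h1 h2
    rw [h1, h2]
  have hint_sq : ∀ u : ℝ, Integrable (fun x => f' (h u x) ^ 2) μ := by
    intro u
    exact (hmemf'.comp_measurePreserving (h_mp u)).integrable_sq
  have hint_prod : ∀ u v : ℝ, Integrable (fun x => f' (h u x) * f' (h v x)) μ := by
    intro u v
    refine Integrable.mono' (((hint_sq u).add (hint_sq v)).div_const 2)
      ((hf'm.comp ((hmeas u))).mul (hf'm.comp (hmeas v))).aestronglyMeasurable
      (ae_of_all _ fun x => ?_)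
    rw [Real.norm_eq_abs, abs_mul]
    simp only [Pi.add_apply]
    nlinarith [sq_nonneg (|f' (h u x)| - |f' (h v x)|), sq_abs (f' (h u x)),
      sq_abs (f' (h v x)), abs_nonneg (f' (h u x)), abs_nonneg (f' (h v x))]
  have hsq_comp : ∀ u : ℝ, ∫ x, f' (h u x) ^ 2 ∂μ = ∫ x, f' x ^ 2 ∂μ := by
    intro u
    have h1 : ∫ y, f' y ^ 2 ∂(μ.map (h u)) = ∫ x, f' (h u x) ^ 2 ∂μ :=
      integral_map (hmeas u).aemeasurable ((hf'm.pow_const 2).aestronglyMeasurable)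
    rw [← h1, (h_mp u).map_eq]
  have hf'S : ∫ x, f' x ^ 2 ∂μ ≤ S ^ 2 := by
    have hi := hmemf'.integrable_sq
    have h0 : 0 ≤ᵐ[μ] fun x => f' x ^ 2 := ae_of_all _ fun x => sq_nonneg _
    have h1 := ofReal_integral_eq_lintegral_ofReal hi h0
    have h2 : ∫⁻ x, ENNReal.ofReal (f' x ^ 2) ∂μ = M₂ := by
      rw [hM₂def]
      refine lintegral_congr fun x => ?_
      rw [← sq_abs (f' x), ENNReal.ofReal_pow (abs_nonneg _),
        ← Real.enorm_eq_ofReal_abs, enorm_eq_nnnorm]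
    rw [h2] at h1
    have h3 : ENNReal.ofReal (∫ x, f' x ^ 2 ∂μ) ≤ ENNReal.ofReal (S ^ 2) := by
      rw [h1, ENNReal.ofReal_pow hS.le]; exact hM₂
    exact (ENNReal.ofReal_le_ofReal_iff (by positivity)).mp h3
  have hCS : ∀ u : ℝ, |C u| ≤ S ^ 2 := by
    intro u
    have habs : |C u| ≤ ∫ x, |f' (h u x) * f' x| ∂μ := by
      have := norm_integral_le_integral_norm (μ := μ) (fun x => f' (h u x) * f' x)
      simpa [Real.norm_eq_abs, abs_mul] using this
    simp only [abs_mul] at habs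
    calc |C u| ≤ ∫ x, |f' (h u x)| * |f' x| ∂μ := habs
      _ ≤ ∫ x, (f' (h u x) ^ 2 + f' x ^ 2) / 2 ∂μ := by
          refine integral_mono ((hint_prod u 0).abs.congr ?_)
            (((hint_sq u).add hmemf'.integrable_sq).div_const 2) fun x => ?_
          · refine ae_of_all _ fun x => ?_
            simp [h_zero, abs_mul]
          · simp only [Pi.add_apply]
            nlinarith [sq_nonneg (|f' (h u x)| - |f' x|), sq_abs (f' (h u x)),
              sq_abs (f' x), abs_nonneg (f' (h u x)), abs_nonneg (f' x)]
      _ = ((∫ x, f' (h u x) ^ 2 ∂μ) + ∫ x, f' x ^ 2 ∂μ) / 2 := by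
          rw [MeasureTheory.integral_div, integral_add (hint_sq u) hmemf'.integrable_sq]
      _ = ∫ x, f' x ^ 2 ∂μ := by rw [hsq_comp]; ring
      _ ≤ S ^ 2 := hf'S
  -- the cutoff scale
  set L : ℝ := t ^ (1 / (1 + β)) with hLdef
  have hL1 : (1:ℝ) ≤ L := Real.one_le_rpow ht (by positivity)
  have hL0 : (0:ℝ) < L := lt_of_lt_of_le one_pos hL1
  have hC_decay : ∀ u : ℝ, L ≤ |u| → |C u| ≤ B * S ^ 2 * L ^ (-β) := by
    intro u hu
    have h1u : 1 ≤ |u| := le_trans hL1 hu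
    have h2 : |u| ^ (-β) ≤ L ^ (-β) :=
      Real.rpow_le_rpow_of_nonpos hL0 hu (neg_nonpos.mpr hβ.le)
    calc |C u| = |∫ x, f (h u x) * f x ∂μ| := by rw [hC_eq]
      _ ≤ B * S ^ 2 * |u| ^ (-β) := hcorr u h1u
      _ ≤ B * S ^ 2 * L ^ (-β) := by
          refine mul_le_mul_of_nonneg_left h2 (by positivity)
  -- the shift identity
  have hC_shift : ∀ r s : ℝ, ∫ x, f' (h r x) * f' (h s x) ∂μ = C (r - s) := by
    intro r s
    have h1 : ∀ x, h r x = h (r - s) (h s x) := by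
      intro x
      have h2 := congrFun (h_add (r - s) s) x
      simpa using h2
    have h2 : ∫ x, f' (h r x) * f' (h s x) ∂μ
        = ∫ x, (fun y => f' (h (r - s) y) * f' y) (h s x) ∂μ := by
      refine integral_congr_ae (ae_of_all _ fun x => ?_)
      simp only [h1 x]
    have h3 : ∫ y, f' (h (r - s) y) * f' y ∂(μ.map (h s))
        = ∫ x, (fun y => f' (h (r - s) y) * f' y) (h s x) ∂μ :=
      integral_map (hmeas s).aemeasurable
        (((hf'm.comp (hmeas (r - s))).mul hf'm).aestronglyMeasurable)
    rw [h2, ← h3, (h_mp s).map_eq]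
  -- product measure setup
  set ν : Measure ℝ := volume.restrict (Set.Ioc 0 t) with hνdef
  have hνuniv : ν Set.univ = ENNReal.ofReal t := by
    simp [hνdef, Real.volume_Ioc]
  set P : Measure (ℝ × ℝ) := ν.prod ν with hPdef
  -- the correlation kernel
  have hK_meas : Measurable (fun z : (ℝ × ℝ) × M => f' (h z.1.1 z.2) * f' (h z.1.2 z.2)) := by
    have h1 : Measurable fun z : (ℝ × ℝ) × M => f' (h z.1.1 z.2) :=
      hf'm.comp (h_joint.comp ((measurable_fst.fst).prodMk measurable_snd))
    have h2 : Measurable fun z : (ℝ × ℝ) × M => f' (h z.1.2 z.2) :=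
      hf'm.comp (h_joint.comp ((measurable_fst.snd).prodMk measurable_snd))
    exact h1.mul h2
  have hmul_le : ∀ a b : ℝ≥0∞, a * b ≤ a ^ 2 + b ^ 2 := by
    intro a b
    rcases le_total a b with hab | hab
    · calc a * b ≤ b * b := mul_le_mul_left hab b
        _ = b ^ 2 := (sq b).symm
        _ ≤ a ^ 2 + b ^ 2 := le_add_self
    · calc a * b ≤ a * a := mul_le_mul_right hab a
        _ = a ^ 2 := (sq a).symm
        _ ≤ a ^ 2 + b ^ 2 := le_self_add
  have hK_int : Integrable (fun z : (ℝ × ℝ) × M => f' (h z.1.1 z.2) * f' (h z.1.2 z.2))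
      (P.prod μ) := by
    refine ⟨hK_meas.aestronglyMeasurable, ?_⟩
    show (∫⁻ z : (ℝ × ℝ) × M, (‖f' (h z.1.1 z.2) * f' (h z.1.2 z.2)‖₊ : ℝ≥0∞)
      ∂(P.prod μ)) < ⊤
    rw [lintegral_prod _ (hK_meas.nnnorm.coe_nnreal_ennreal.aemeasurable)]
    have hbound : ∀ p : ℝ × ℝ,
        ∫⁻ x, (‖f' (h p.1 x) * f' (h p.2 x)‖₊ : ℝ≥0∞) ∂μ ≤ 2 * M₂ := by
      intro p
      calc ∫⁻ x, (‖f' (h p.1 x) * f' (h p.2 x)‖₊ : ℝ≥0∞) ∂μ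
          ≤ ∫⁻ x, ((‖f' (h p.1 x)‖₊ : ℝ≥0∞) ^ 2 + (‖f' (h p.2 x)‖₊ : ℝ≥0∞) ^ 2) ∂μ := by
            refine lintegral_mono fun x => ?_
            rw [nnnorm_mul, ENNReal.coe_mul]
            exact hmul_le _ _
        _ = M₂ + M₂ := by
            have hm1 : Measurable fun x : M => (‖f' (h p.1 x)‖₊ : ℝ≥0∞) ^ 2 :=
              ((hf'm.comp (hmeas p.1)).nnnorm.coe_nnreal_ennreal).pow_const 2
            rw [lintegral_add_left hm1]
            rw [hcomp_sq p.1, hcomp_sq p.2]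
        _ = 2 * M₂ := (two_mul M₂).symm
    calc ∫⁻ p, ∫⁻ x, (‖f' (h p.1 x) * f' (h p.2 x)‖₊ : ℝ≥0∞) ∂μ ∂P
        ≤ ∫⁻ _, 2 * M₂ ∂P := lintegral_mono hbound
      _ = 2 * M₂ * P Set.univ := by rw [lintegral_const]
      _ < ⊤ := by
          refine ENNReal.mul_lt_top (ENNReal.mul_lt_top ?_ hM₂top) ?_
          · exact ENNReal.ofNat_lt_top
          · rw [hPdef, ← Set.univ_prod_univ, Measure.prod_prod, hνuniv]
            exact ENNReal.mul_lt_top ENNReal.ofReal_lt_top ENNReal.ofReal_lt_top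
  -- the measurable version of the ergodic integral
  set g' : M → ℝ := fun x => ∫ r, f' (h r x) ∂ν with hg'def
  have hg'_sm : StronglyMeasurable g' := by
    have h1 : StronglyMeasurable (Function.uncurry fun (r : ℝ) (x : M) => f' (h r x)) :=
      hf'sm.comp_measurable h_joint
    exact h1.integral_prod_left
  -- identification with the interval integral
  have hbad : (μ.prod ν) {z : M × ℝ | h z.2 z.1 ∈ N} = 0 := by
    have hms' : MeasurableSet {w : ℝ × M | h w.1 w.2 ∈ N} := h_joint hNmeas
    have hswap : (μ.prod ν) {z : M × ℝ | h z.2 z.1 ∈ N}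
        = (ν.prod μ) {w : ℝ × M | h w.1 w.2 ∈ N} := by
      rw [show (ν.prod μ) = Measure.map Prod.swap (μ.prod ν) from (Measure.prod_swap).symm,
        Measure.map_apply measurable_swap hms']
      rfl
    have hsec : ∀ r : ℝ, μ (Prod.mk r ⁻¹' {w : ℝ × M | h w.1 w.2 ∈ N}) = 0 := by
      intro r
      have he : Prod.mk r ⁻¹' {w : ℝ × M | h w.1 w.2 ∈ N} = h r ⁻¹' N := rfl
      rw [he, (h_mp r).measure_preimage hNmeas.nullMeasurableSet]
      exact hNnull
    rw [hswap, Measure.prod_apply hms']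
    exact (lintegral_congr hsec).trans lintegral_zero
  have hae2 : ∀ᵐ x ∂μ, ∀ᵐ r ∂ν, f (h r x) = f' (h r x) := by
    have h1 : ∀ᵐ z ∂(μ.prod ν), h z.2 z.1 ∉ N := measure_eq_zero_iff_ae_notMem.mp hbad
    have h2 := Measure.ae_ae_of_ae_prod h1
    filter_upwards [h2] with x hx
    filter_upwards [hx] with r hr
    exact hfN _ hr
  have hgg' : (fun x => ∫ r in (0:ℝ)..t, f (h r x)) =ᵐ[μ] g' := by
    filter_upwards [hae2] with x hx
    rw [intervalIntegral.integral_of_le ht0.le]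
    exact integral_congr_ae hx
  -- Fubini
  have key : ∫ x, g' x ^ 2 ∂μ = ∫ p, C (p.1 - p.2) ∂P := by
    have h1 : ∀ x, g' x ^ 2 = ∫ p, f' (h p.1 x) * f' (h p.2 x) ∂P := by
      intro x
      rw [sq]
      exact (integral_prod_mul (μ := ν) (ν := ν)
        (fun r => f' (h r x)) (fun r => f' (h r x))).symm
    have h2 : ∫ x, g' x ^ 2 ∂μ = ∫ x, ∫ p, f' (h p.1 x) * f' (h p.2 x) ∂P ∂μ :=
      integral_congr_ae (ae_of_all _ h1)
    have h3 := integral_integral_swap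
      (f := fun (p : ℝ × ℝ) (x : M) => f' (h p.1 x) * f' (h p.2 x)) hK_int
    rw [h2, ← h3]
    exact integral_congr_ae (ae_of_all _ fun p => hC_shift p.1 p.2)
  -- integrability of `g' ^ 2`
  have hmaj := hK_int.integral_norm_prod_right
  have hg'_sq_int : Integrable (fun x => g' x ^ 2) μ := by
    refine hmaj.mono'
      ((hg'_sm.aestronglyMeasurable.mul hg'_sm.aestronglyMeasurable).congr
        (ae_of_all _ fun x => (sq (g' x)).symm)) (ae_of_all _ fun x => ?_)
    have e0 : ‖g' x ^ 2‖ = |g' x| ^ 2 := by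
      rw [Real.norm_eq_abs, abs_pow]
    rw [e0]
    have e1 : |g' x| ≤ ∫ r, |f' (h r x)| ∂ν := by
      have := norm_integral_le_integral_norm (μ := ν) (fun r => f' (h r x))
      simpa [Real.norm_eq_abs] using this
    calc |g' x| ^ 2 ≤ (∫ r, |f' (h r x)| ∂ν) ^ 2 := by
          exact pow_le_pow_left₀ (abs_nonneg _) e1 2
      _ = ∫ p, |f' (h p.1 x)| * |f' (h p.2 x)| ∂P := by
          rw [sq]
          exact (integral_prod_mul (μ := ν) (ν := ν)
            (fun r => |f' (h r x)|) (fun r => |f' (h r x)|)).symm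
      _ = ∫ p, ‖f' (h p.1 x) * f' (h p.2 x)‖ ∂P := by
          refine integral_congr_ae (ae_of_all _ fun p => ?_)
          exact (abs_mul _ _).symm
  -- the left-hand side as a real integral
  have hLHS : (eLpNorm (fun x => ∫ r in (0:ℝ)..t, f (h r x)) 2 μ) ^ 2
      = ENNReal.ofReal (∫ x, g' x ^ 2 ∂μ) := by
    rw [eLpNorm_congr_ae hgg',
      eLpNorm_eq_lintegral_rpow_enorm_toReal two_ne_zero ENNReal.ofNat_ne_top]
    simp only [enorm_eq_nnnorm]
    have e1 : ∫⁻ x, (‖g' x‖₊ : ℝ≥0∞) ^ (2:ℝ) ∂μ = ENNReal.ofReal (∫ x, g' x ^ 2 ∂μ) := by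
      rw [ofReal_integral_eq_lintegral_ofReal hg'_sq_int (ae_of_all _ fun x => sq_nonneg _)]
      refine lintegral_congr fun x => ?_
      rw [show ((2:ℝ)) = ((2:ℕ):ℝ) by norm_num, ENNReal.rpow_natCast,
        ← sq_abs (g' x), ENNReal.ofReal_pow (abs_nonneg _), ← Real.enorm_eq_ofReal_abs, enorm_eq_nnnorm]
    have e2 : ((2:ℝ≥0∞)).toReal = (2:ℝ) := by norm_num
    rw [e2, e1, ← ENNReal.rpow_natCast _ 2, ← ENNReal.rpow_mul]
    norm_num
  -- the near-diagonal strip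
  have hA : MeasurableSet {p : ℝ × ℝ | |p.1 - p.2| ≤ L} :=
    measurableSet_le ((measurable_fst.sub measurable_snd).abs) measurable_const
  have hPuniv : P Set.univ = ENNReal.ofReal t * ENNReal.ofReal t := by
    rw [hPdef, ← Set.univ_prod_univ, Measure.prod_prod, hνuniv]
  have hPA : P {p : ℝ × ℝ | |p.1 - p.2| ≤ L}
      ≤ ENNReal.ofReal (2 * L) * ENNReal.ofReal t := by
    rw [hPdef, Measure.prod_apply hA]
    have hsec : ∀ r : ℝ, Prod.mk r ⁻¹' {p : ℝ × ℝ | |p.1 - p.2| ≤ L}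
        = Set.Icc (r - L) (r + L) := by
      intro r
      ext s1
      simp only [Set.mem_preimage, Set.mem_setOf_eq, Set.mem_Icc, abs_le]
      constructor
      · rintro ⟨h1, h2⟩; constructor <;> linarith
      · rintro ⟨h1, h2⟩; constructor <;> linarith
    calc ∫⁻ r, ν (Prod.mk r ⁻¹' {p : ℝ × ℝ | |p.1 - p.2| ≤ L}) ∂ν
        ≤ ∫⁻ _, ENNReal.ofReal (2 * L) ∂ν := by
          refine lintegral_mono fun r => ?_
          rw [hsec r, hνdef, Measure.restrict_apply measurableSet_Icc]
          calc volume (Set.Icc (r - L) (r + L) ∩ Set.Ioc 0 t)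
              ≤ volume (Set.Icc (r - L) (r + L)) := measure_mono Set.inter_subset_left
            _ = ENNReal.ofReal (2 * L) := by
                rw [Real.volume_Icc]
                congr 1
                ring
      _ = ENNReal.ofReal (2 * L) * ν Set.univ := lintegral_const _
      _ = ENNReal.ofReal (2 * L) * ENNReal.ofReal t := by rw [hνuniv]
  -- integrability of the correlation over the square
  have hCint : Integrable (fun p : ℝ × ℝ => C (p.1 - p.2)) P := by
    have h1 := hK_int.integral_prod_left
    exact h1.congr (ae_of_all _ fun p => hC_shift p.1 p.2)
  -- the real exponent computation
  have hT0 : (0:ℝ) ≤ t ^ (2 - β / (1 + β)) := Real.rpow_nonneg ht0.le _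
  have ha : L ^ (-β) = t ^ (-(β / (1 + β))) := by
    rw [hLdef, ← Real.rpow_mul ht0.le]
    congr 1
    field_simp
  have hb : t * t = t ^ (2:ℝ) := by
    rw [show (2:ℝ) = ((2:ℕ):ℝ) by norm_num, Real.rpow_natCast]
    ring
  have hc : L ^ (-β) * (t * t) = t ^ (2 - β / (1 + β)) := by
    rw [ha, hb, ← Real.rpow_add ht0]
    congr 1
    ring
  have hd : L * t = t ^ (2 - β / (1 + β)) := by
    rw [hLdef]
    nth_rewrite 2 [show t = t ^ (1:ℝ) from (Real.rpow_one t).symm]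
    rw [← Real.rpow_add ht0]
    congr 1
    field_simp
    ring
  have hreal : B * S ^ 2 * L ^ (-β) * (t * t) + S ^ 2 * (2 * L * t)
      ≤ (4 + B) * S ^ 2 * t ^ (2 - β / (1 + β)) := by
    calc B * S ^ 2 * L ^ (-β) * (t * t) + S ^ 2 * (2 * L * t)
        = B * S ^ 2 * (L ^ (-β) * (t * t)) + 2 * S ^ 2 * (L * t) := by ring
      _ = B * S ^ 2 * t ^ (2 - β / (1 + β)) + 2 * S ^ 2 * t ^ (2 - β / (1 + β)) := by
          rw [hc, hd]
      _ ≤ (4 + B) * S ^ 2 * t ^ (2 - β / (1 + β)) := by nlinarith [sq_nonneg S]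
  -- put everything together
  calc (eLpNorm (fun x => ∫ r in (0:ℝ)..t, f (h r x)) 2 μ) ^ 2
      = ENNReal.ofReal (∫ x, g' x ^ 2 ∂μ) := hLHS
    _ = ENNReal.ofReal (∫ p, C (p.1 - p.2) ∂P) := by rw [key]
    _ ≤ ENNReal.ofReal (∫ p, |C (p.1 - p.2)| ∂P) :=
        ENNReal.ofReal_le_ofReal
          (integral_mono hCint hCint.abs fun p => le_abs_self _)
    _ = ∫⁻ p, ENNReal.ofReal |C (p.1 - p.2)| ∂P :=
        ofReal_integral_eq_lintegral_ofReal hCint.abs (ae_of_all _ fun p => abs_nonneg _)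
    _ ≤ ∫⁻ p, (ENNReal.ofReal (B * S ^ 2 * L ^ (-β))
          + Set.indicator {p : ℝ × ℝ | |p.1 - p.2| ≤ L}
            (fun _ => ENNReal.ofReal (S ^ 2)) p) ∂P := by
        refine lintegral_mono fun p => ?_
        by_cases hp : p ∈ {p : ℝ × ℝ | |p.1 - p.2| ≤ L}
        · rw [Set.indicator_of_mem hp]
          exact le_trans (ENNReal.ofReal_le_ofReal (hCS _)) le_add_self
        · have hge : L ≤ |p.1 - p.2| := le_of_not_ge hp
          rw [Set.indicator_of_notMem hp, add_zero]
          exact ENNReal.ofReal_le_ofReal (hC_decay _ hge)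
    _ = ENNReal.ofReal (B * S ^ 2 * L ^ (-β)) * P Set.univ
          + ENNReal.ofReal (S ^ 2) * P {p : ℝ × ℝ | |p.1 - p.2| ≤ L} := by
        rw [lintegral_add_left measurable_const, lintegral_const,
          lintegral_indicator hA, setLIntegral_const]
    _ ≤ ENNReal.ofReal (B * S ^ 2 * L ^ (-β)) * (ENNReal.ofReal t * ENNReal.ofReal t)
          + ENNReal.ofReal (S ^ 2) * (ENNReal.ofReal (2 * L) * ENNReal.ofReal t) := by
        refine add_le_add (le_of_eq (by rw [hPuniv])) (mul_le_mul_right hPA _)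
    _ = ENNReal.ofReal (B * S ^ 2 * L ^ (-β) * (t * t) + S ^ 2 * (2 * L * t)) := by
        rw [← ENNReal.ofReal_mul ht0.le, ← ENNReal.ofReal_mul (by positivity),
          ← ENNReal.ofReal_mul (by positivity), ← ENNReal.ofReal_mul (by positivity),
          ← ENNReal.ofReal_add (by positivity) (by positivity)]
    _ ≤ ENNReal.ofReal ((4 + B) * S ^ 2 * t ^ (2 - β / (1 + β))) :=
        ENNReal.ofReal_le_ofReal hreal
end

section
/- Let (h_t)_{t∈ℝ} be a measurable measure-preserving flow on a probability space (M, μ), let f : M → ℝ be a bounded measurable function, and let B' > 0, S > 0 and 0 < β₀ < 1 be constants such that the ergodic integrals I_t f(x) = ∫₀^t f(h_r(x)) dr satisfy ‖I_t f‖₂² ≤ B' S² t^{2-β₀} for all t ≥ 1. Set γ = β₀/4. Then there exists a constant B̃ ≥ 1, depending only on β₀ and B', such that for every T₀ ≥ 1 there exists a measurable set E ⊆ M with μ(E) ≤ T₀^{-γ} such that for all t ≥ T₀ and all x ∈ M \ E one has |I_t f(x)| ≤ B̃ (S + ‖f‖_∞) t^{1-γ}. -/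
open MeasureTheory intervalIntegral
open scoped ENNReal

section AuxLemmas


lemma aux_rpow_gap {a b m : ℝ} (hb : 0 < b) (hba : b ≤ a) (hm : 1 ≤ m) :
    a ^ m - b ^ m ≤ m * a ^ (m - 1) * (a - b) := by
  have ha : 0 < a := hb.trans_le hba
  have h1 : (-1 : ℝ) ≤ (b - a) / a := by
    rw [le_div_iff₀ ha]; linarith
  have hber := one_add_mul_self_le_rpow_one_add h1 hm
  have h2 : (1 + (b - a) / a) = b / a := by field_simp; ring
  rw [h2] at hber
  have h3 : (b / a) ^ m = b ^ m / a ^ m := Real.div_rpow hb.le ha.le m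
  rw [h3] at hber
  have ham : 0 < a ^ m := Real.rpow_pos_of_pos ha m
  have ham1 : a ^ (m - 1) * a = a ^ m := by
    rw [Real.rpow_sub ha, Real.rpow_one]; field_simp
  have key : (1 + m * ((b - a) / a)) * a ^ m ≤ b ^ m := (le_div_iff₀ ham).mp hber
  calc a ^ m - b ^ m ≤ a ^ m - (1 + m * ((b - a) / a)) * a ^ m := by linarith [key]
    _ = m * a ^ (m - 1) * (a - b) := by rw [← ham1]; field_simp; ring

lemma aux_real_ineq {B' γ S P w u c K2 : ℝ} (hB' : 0 < B') (hγ : 0 < γ) (hS : 0 < S)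
    (hP : 0 < P) (hw : 1 ≤ w) (hu : 1 ≤ u) (hc : 0 < c) (hcγ : c = γ * w⁻¹)
    (hK2 : K2 = B' * (1 + 1/γ)) :
    (K2 * S^2 * P)⁻¹ * (B' * S^2 * (P * ((w*u)⁻¹)^2)) ≤ w⁻¹ * (u⁻¹ - (u+c)⁻¹) := by
  have hw0 : (0:ℝ) < w := lt_of_lt_of_le one_pos hw
  have hu0 : (0:ℝ) < u := lt_of_lt_of_le one_pos hu
  have hK20 : 0 < K2 := by rw [hK2]; positivity
  have hc' : c * w = γ := by rw [hcγ]; field_simp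
  have hLHS : (K2 * S^2 * P)⁻¹ * (B' * S^2 * (P * ((w*u)⁻¹)^2)) = B' / K2 * ((w*u)⁻¹)^2 := by
    field_simp
  have hRHS : w⁻¹ * (u⁻¹ - (u+c)⁻¹) = c / (w*u*(u+c)) := by
    rw [inv_sub_inv hu0.ne' (by positivity), show u + c - u = c by ring,
      eq_div_iff (by positivity : (0:ℝ) < w*u*(u+c)).ne']
    field_simp
  have hBK : B' / K2 = γ / (γ+1) := by
    rw [hK2]; field_simp
  rw [hLHS, hRHS, hBK, ← sub_nonneg]
  have hnum : c*(γ+1)*w^2*u^2 - γ*(w*u*(u+c)) = γ^2*u*(w*u-1) := by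
    linear_combination ((γ+1)*w*u^2 - γ*u) * hc'
  have hdiff : c / (w*u*(u+c)) - γ/(γ+1)*((w*u)⁻¹)^2
      = (c*(γ+1)*w^2*u^2 - γ*(w*u*(u+c))) / ((w*u*(u+c))*((γ+1)*(w*u)^2)) := by
    field_simp
  rw [hdiff, hnum]
  apply div_nonneg _ (by positivity)
  have hwu : 1 ≤ w * u := by nlinarith
  have := mul_nonneg (mul_nonneg (sq_nonneg γ) hu0.le) (sub_nonneg.mpr hwu)
  linarith

/-- Off a null set, the flow orbit of `x` sees `|f|` bounded by the essential sup a.e. -/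
lemma aux_null_set {M : Type*} [MeasurableSpace M] (μ : Measure M) [IsProbabilityMeasure μ]
    (f : M → ℝ) (hf : Measurable f) (C : ℝ) (hC : ∀ x, |f x| ≤ C)
    (h : ℝ → M → M) (hunc : Measurable (Function.uncurry h))
    (hmp : ∀ t : ℝ, MeasurePreserving (h t) μ μ) :
    ∃ N : Set M, MeasurableSet N ∧ μ N = 0 ∧ ∀ x ∉ N,
      ∀ᵐ r ∂(volume : Measure ℝ), |f (h r x)| ≤ (eLpNorm f ⊤ μ).toReal := by
  set L := (eLpNorm f ⊤ μ).toReal with hL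
  have hfin : eLpNorm f ⊤ μ ≠ ⊤ := by
    rw [eLpNorm_exponent_top]
    exact ((eLpNormEssSup_le_of_ae_bound (C := C)
      (ae_of_all _ fun x => by rw [Real.norm_eq_abs]; exact hC x)).trans_lt
      ENNReal.ofReal_lt_top).ne
  have hfae : ∀ᵐ x ∂μ, |f x| ≤ L := by
    filter_upwards [enorm_ae_le_eLpNormEssSup f μ] with x hx
    have : ((‖f x‖₊ : ℝ≥0∞)).toReal ≤ (eLpNormEssSup f μ).toReal :=
      ENNReal.toReal_mono (by rwa [eLpNorm_exponent_top] at hfin) hx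
    simpa [hL, eLpNorm_exponent_top, Real.norm_eq_abs] using this
  have hμnull : μ {y | L < |f y|} = 0 := by
    rw [ae_iff] at hfae
    simpa [not_le] using hfae
  set F : M × ℝ → ℝ := fun q => f (h q.2 q.1) with hFdef
  have hF : Measurable F := hf.comp (hunc.comp measurable_swap)
  set A : Set (M × ℝ) := {q | L < |F q|} with hA
  have mA : MeasurableSet A := measurableSet_lt measurable_const hF.abs
  have mA' : MeasurableSet (Prod.swap ⁻¹' A : Set (ℝ × M)) := mA.preimage measurable_swap
  have h1 : ((volume : Measure ℝ).prod μ) (Prod.swap ⁻¹' A) = 0 := by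
    rw [MeasureTheory.Measure.measure_prod_null mA']
    refine ae_of_all _ fun r => ?_
    show μ (Prod.mk r ⁻¹' (Prod.swap ⁻¹' A)) = 0
    have e : (Prod.mk r ⁻¹' (Prod.swap ⁻¹' A) : Set M) = (h r) ⁻¹' {y | L < |f y|} := rfl
    rw [e, (hmp r).measure_preimage
      (measurableSet_lt measurable_const hf.abs).nullMeasurableSet, hμnull]
  have h2 : (μ.prod (volume : Measure ℝ)) A = 0 := by
    have hswap : (μ.prod (volume : Measure ℝ)) A
        = ((volume : Measure ℝ).prod μ) (Prod.swap ⁻¹' A) := by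
      rw [← MeasureTheory.Measure.prod_swap, Measure.map_apply measurable_swap mA]
    rw [hswap, h1]
  have h3' : ∀ᵐ x ∂μ, (volume : Measure ℝ) (Prod.mk x ⁻¹' A) = 0 := by
    filter_upwards [MeasureTheory.Measure.measure_ae_null_of_prod_null h2] with x hx using hx
  refine ⟨toMeasurable μ {x | (volume : Measure ℝ) (Prod.mk x ⁻¹' A) ≠ 0},
    measurableSet_toMeasurable _ _, ?_, ?_⟩
  · rw [measure_toMeasurable]
    rw [ae_iff] at h3'
    simpa using h3'
  · intro x hx
    have hx0 : (volume : Measure ℝ) (Prod.mk x ⁻¹' A) = 0 := by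
      by_contra hne
      exact hx (subset_toMeasurable _ _ hne)
    rw [ae_iff]
    have e : {r : ℝ | ¬ |f (h r x)| ≤ L} = Prod.mk x ⁻¹' A := by
      ext r; simp [hA, hFdef, not_le]
    rw [e, hx0]

/-- A bounded-a.e. interval integral bound. -/
lemma aux_interval_bound {g : ℝ → ℝ} {L a b : ℝ} (hg : ∀ᵐ r ∂(volume : Measure ℝ), |g r| ≤ L)
    (hab : a ≤ b) (hint : IntervalIntegrable g volume a b) :
    |∫ r in a..b, g r| ≤ L * (b - a) := by
  rw [integral_of_le hab]
  have h1 : |∫ r in Set.Ioc a b, g r| ≤ ∫ r in Set.Ioc a b, |g r| := by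
    simpa [Real.norm_eq_abs] using
      MeasureTheory.norm_integral_le_integral_norm (μ := volume.restrict (Set.Ioc a b)) g
  have h2 : ∫ r in Set.Ioc a b, |g r| ≤ ∫ r in Set.Ioc a b, (fun _ => L) r := by
    apply setIntegral_mono_ae_restrict ((hint.1).abs)
      (integrableOn_const measure_Ioc_lt_top.ne)
    exact ae_restrict_of_ae hg
  have h3 : ∫ r in Set.Ioc a b, (fun _ => L) r = L * (b - a) := by
    rw [setIntegral_const, Real.volume_real_Ioc_of_le hab, smul_eq_mul,
      mul_comm]
  calc |∫ r in Set.Ioc a b, g r| ≤ _ := h1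
    _ ≤ _ := h2
    _ = _ := h3

end AuxLemmas

set_option maxHeartbeats 2000000 in
/-- (Proposition 3.1.) If the ergodic integrals `I_t f` of a bounded
measurable function `f` satisfy `‖I_t f‖₂² ≤ B' S² t^{2-β₀}` for all `t ≥ 1`, then with
`γ = β₀/4` there is a constant `B̃ ≥ 1`, depending only on `β₀` and `B'`, such that for every
`T₀ ≥ 1` there is a measurable set `E` of measure `μ(E) ≤ T₀^{-γ}` with
`|I_t f(x)| ≤ B̃ (S + ‖f‖_∞) t^{1-γ}` for all `t ≥ T₀` and `x ∉ E`. -/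
theorem ergodic_integral_pointwise_bound_off_small_set
    (β₀ B' : ℝ) (hβ₀ : 0 < β₀) (hβ₀' : β₀ < 1) (hB' : 0 < B') :
    ∃ Btilde : ℝ, 1 ≤ Btilde ∧
      ∀ (M : Type*) (_ : MeasurableSpace M) (μ : Measure M),
        IsProbabilityMeasure μ →
        ∀ h : ℝ → M → M,
          (∀ t : ℝ, Measurable (h t)) →
          h 0 = id →
          (∀ t s : ℝ, h (t + s) = h t ∘ h s) →
          Measurable (Function.uncurry h) →
          (∀ t : ℝ, MeasurePreserving (h t) μ μ) →
          ∀ f : M → ℝ, Measurable f → (∃ C : ℝ, ∀ x, |f x| ≤ C) →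
            ∀ S : ℝ, 0 < S →
              (∀ t : ℝ, 1 ≤ t →
                (eLpNorm (fun x => ∫ r in (0:ℝ)..t, f (h r x)) 2 μ) ^ 2 ≤
                  ENNReal.ofReal (B' * S ^ 2 * t ^ (2 - β₀))) →
              ∀ T₀ : ℝ, 1 ≤ T₀ →
                ∃ E : Set M, MeasurableSet E ∧
                  μ E ≤ ENNReal.ofReal (T₀ ^ (-(β₀ / 4))) ∧
                  ∀ t : ℝ, T₀ ≤ t → ∀ x ∉ E,
                    |∫ r in (0:ℝ)..t, f (h r x)| ≤
                      Btilde * (S + (eLpNorm f ⊤ μ).toReal) * t ^ (1 - β₀ / 4) := by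
  set γ : ℝ := β₀ / 4 with hγdef
  have hγ0 : 0 < γ := by positivity
  have hγ1 : γ < 1 := by rw [hγdef]; linarith
  set K : ℝ := Real.sqrt (B' * (1 + 1/γ)) with hKdef
  have hKpos : 0 < K := Real.sqrt_pos.mpr (by positivity)
  have hK2 : K ^ 2 = B' * (1 + 1/γ) := Real.sq_sqrt (by positivity)
  refine ⟨K + 3, by linarith, ?_⟩
  intro M mM μ hμ h hmeas h0 hadd hunc hmp f hf hfC S hS hL2 T₀ hT₀
  obtain ⟨C, hC⟩ := hfC
  have hT₀0 : (0:ℝ) < T₀ := by linarith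
  set L : ℝ := (eLpNorm f ⊤ μ).toReal with hLdef
  have hL0 : 0 ≤ L := ENNReal.toReal_nonneg
  -- basic flow-integrand facts
  have hgx : ∀ x : M, Measurable fun r : ℝ => f (h r x) := fun x =>
    hf.comp (hunc.comp (measurable_id.prodMk measurable_const))
  have hInt : ∀ (x : M) (a b : ℝ), IntervalIntegrable (fun r => f (h r x)) volume a b := by
    intro x a b
    rw [intervalIntegrable_iff]
    exact (integrableOn_const (C := C) measure_Ioc_lt_top.ne).mono'
      (hgx x).aestronglyMeasurable (ae_of_all _ fun r => by rw [Real.norm_eq_abs]; exact hC _)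
  have hIm : ∀ a b : ℝ, Measurable fun x => ∫ r in a..b, f (h r x) := by
    have key : ∀ a b : ℝ, Measurable fun x => ∫ r in Set.Ioc a b, f (h r x) := by
      intro a b
      have hF : Measurable fun q : M × ℝ => f (h q.2 q.1) := hf.comp (hunc.comp measurable_swap)
      exact (hF.stronglyMeasurable.integral_prod_right'
        (ν := volume.restrict (Set.Ioc a b))).measurable
    intro a b
    have e : (fun x => ∫ r in a..b, f (h r x))
        = fun x => (∫ r in Set.Ioc a b, f (h r x)) - ∫ r in Set.Ioc b a, f (h r x) := rfl
    rw [e]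
    exact (key a b).sub (key b a)
  -- grid construction
  set w : ℝ := T₀ ^ γ with hwdef
  have hw1 : 1 ≤ w := Real.one_le_rpow hT₀ hγ0.le
  have hw0 : 0 < w := lt_of_lt_of_le one_pos hw1
  set c : ℝ := γ * w⁻¹ with hcdef
  have hc0 : 0 < c := by positivity
  have hcγ : c ≤ γ := by
    rw [hcdef]
    nlinarith [inv_le_one_of_one_le₀ hw1]
  set m : ℝ := 1 / γ with hmdef
  have hm1 : 1 ≤ m := by
    rw [hmdef, le_div_iff₀ hγ0]; linarith
  have hm0 : 0 < m := lt_of_lt_of_le one_pos hm1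
  set u : ℕ → ℝ := fun j => 1 + c * j with hudef
  have hu1 : ∀ j, 1 ≤ u j := fun j => by
    have : (0:ℝ) ≤ c * j := by positivity
    simp only [hudef]; linarith
  have hu0 : ∀ j, 0 < u j := fun j => lt_of_lt_of_le one_pos (hu1 j)
  have husucc : ∀ j, u (j+1) = u j + c := by
    intro j; simp only [hudef]; push_cast; ring
  set p : ℕ → ℝ := fun j => T₀ * u j ^ m with hpdef
  have hp0 : ∀ j, 0 < p j := fun j => by
    have := Real.rpow_pos_of_pos (hu0 j) m
    simp only [hpdef]; positivity
  have hpT₀ : ∀ j, T₀ ≤ p j := by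
    intro j
    have h1 : 1 ≤ u j ^ m := Real.one_le_rpow (hu1 j) hm0.le
    calc T₀ = T₀ * 1 := by ring
      _ ≤ T₀ * u j ^ m := by nlinarith
  have hp1 : ∀ j, 1 ≤ p j := fun j => le_trans hT₀ (hpT₀ j)
  have hpmono : ∀ j, p j ≤ p (j+1) := by
    intro j
    have h1 : u j ≤ u (j+1) := by rw [husucc]; linarith
    have h2 : u j ^ m ≤ u (j+1) ^ m :=
      Real.rpow_le_rpow (hu0 j).le h1 hm0.le
    simp only [hpdef]; nlinarith
  have hpγ : ∀ j, p j ^ γ = w * u j := by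
    intro j
    simp only [hpdef]
    rw [Real.mul_rpow hT₀0.le (Real.rpow_nonneg (hu0 j).le m), ← Real.rpow_mul (hu0 j).le,
      show m * γ = 1 by rw [hmdef]; field_simp, Real.rpow_one, hwdef]
  have hwinv : T₀ ^ (-γ) = w⁻¹ := by
    rw [hwdef, Real.rpow_neg hT₀0.le]
  -- gap bound
  have hgap : ∀ j, p (j+1) - p j ≤ p (j+1) ^ (1-γ) := by
    intro j
    have hle : u j ≤ u (j+1) := by rw [husucc]; linarith
    have key := aux_rpow_gap (hu0 j) hle hm1
    have hd : u (j+1) - u j = c := by rw [husucc]; ring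
    rw [hd] at key
    have hTw : T₀ * (m * c) = T₀ ^ (1-γ) := by
      rw [hmdef, hcdef, hwdef, show (1:ℝ)-γ = 1 + -γ by ring, Real.rpow_add hT₀0,
        Real.rpow_one, Real.rpow_neg hT₀0.le]
      field_simp
    have e1 : p (j+1) ^ (1-γ) = T₀ ^ (1-γ) * u (j+1) ^ (m-1) := by
      simp only [hpdef]
      rw [Real.mul_rpow hT₀0.le (Real.rpow_nonneg (hu0 _).le m), ← Real.rpow_mul (hu0 _).le,
        show m * (1-γ) = m - 1 by rw [hmdef]; field_simp]
    have hum1 : 0 ≤ u (j+1) ^ (m-1) := Real.rpow_nonneg (hu0 _).le _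
    have : p (j+1) - p j = T₀ * (u (j+1) ^ m - u j ^ m) := by simp only [hpdef]; ring
    rw [this, e1, ← hTw]
    nlinarith [key, hT₀0]
  -- ratio bound
  have hratio : ∀ j, p (j+1) ≤ 3 * p j := by
    intro j
    have h1 : u (j+1) ≤ u j * (1 + c) := by
      rw [husucc]; nlinarith [hu1 j, hc0]
    have h2 : u (j+1) ^ m ≤ (u j * (1+c)) ^ m :=
      Real.rpow_le_rpow (hu0 _).le h1 hm0.le
    have h3 : (u j * (1+c)) ^ m = u j ^ m * (1+c) ^ m :=
      Real.mul_rpow (hu0 j).le (by linarith)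
    have h4 : (1+c) ^ m ≤ 3 := by
      have e5 : (1+c) ≤ Real.exp c := by linarith [Real.add_one_le_exp c]
      have e6 : (1+c) ^ m ≤ (Real.exp c) ^ m := Real.rpow_le_rpow (by linarith) e5 hm0.le
      have e7 : (Real.exp c) ^ m = Real.exp (c * m) := by
        rw [Real.rpow_def_of_pos (Real.exp_pos c), Real.log_exp]
      have ecm : c * m = w⁻¹ := by
        rw [hcdef, hmdef]
        rw [mul_comm γ w⁻¹, mul_assoc, mul_one_div, div_self hγ0.ne', mul_one]
      have e8 : c * m ≤ 1 := by rw [ecm]; exact inv_le_one_of_one_le₀ hw1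
      have e9 : Real.exp (c*m) ≤ Real.exp 1 := Real.exp_le_exp.mpr e8
      have e10 : Real.exp 1 ≤ 3 := by
        have := Real.exp_one_lt_d9
        linarith [this]
      linarith [e6, e7 ▸ e9]
    have hum : 0 < u j ^ m := Real.rpow_pos_of_pos (hu0 j) m
    have h5 : u j ^ m * (1+c) ^ m ≤ u j ^ m * 3 := mul_le_mul_of_nonneg_left h4 hum.le
    have h6 : u (j+1) ^ m ≤ 3 * u j ^ m := by rw [h3] at h2; linarith
    simp only [hpdef]
    nlinarith [h6, hT₀0]
  have hp0T : p 0 = T₀ := by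
    simp only [hpdef, hudef]
    norm_num
  -- index localization
  have hex : ∀ t : ℝ, T₀ ≤ t → ∃ j : ℕ, p j ≤ t ∧ t < p (j+1) := by
    intro t ht
    have hub : ∃ n : ℕ, t < p n := by
      obtain ⟨n, hn⟩ := exists_nat_gt ((t/T₀ - 1)/c)
      refine ⟨n, ?_⟩
      have h2 : t/T₀ - 1 < c * n := by
        rw [div_lt_iff₀ hc0] at hn; linarith [hn]
      have h3 : t < T₀ * u n := by
        have hq : t/T₀ < u n := by simp only [hudef]; linarith
        calc t = T₀ * (t/T₀) := by field_simp
          _ < T₀ * u n := by nlinarith [hT₀0]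
      have h4 : u n ≤ u n ^ m := by
        calc u n = u n ^ (1:ℝ) := (Real.rpow_one _).symm
          _ ≤ u n ^ m := Real.rpow_le_rpow_of_exponent_le (hu1 n) hm1
      calc t < T₀ * u n := h3
        _ ≤ T₀ * u n ^ m := by nlinarith [hT₀0]
        _ = p n := rfl
    classical
    have hn : t < p (Nat.find hub) := Nat.find_spec hub
    have hn0 : Nat.find hub ≠ 0 := by
      intro h0'
      rw [h0', hp0T] at hn
      linarith
    obtain ⟨j, hj⟩ := Nat.exists_eq_succ_of_ne_zero hn0
    rw [Nat.succ_eq_add_one] at hj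
    refine ⟨j, ?_, ?_⟩
    · by_contra hcon
      push_neg at hcon
      exact Nat.find_min hub (by omega) hcon
    · rw [hj] at hn; exact hn
  -- exceptional null set from Fubini
  obtain ⟨N, mN, hN0, hNae⟩ := aux_null_set μ f hf C hC h hunc hmp
  -- Chebyshev sets
  set lam : ℕ → ℝ := fun j => K * S * p j ^ (1-γ) with hlamdef
  have hlam0 : ∀ j, 0 < lam j := fun j => by
    have := Real.rpow_pos_of_pos (hp0 j) (1-γ)
    simp only [hlamdef]; positivity
  set Ej : ℕ → Set M := fun j => {x | lam j ≤ |∫ r in (0:ℝ)..p j, f (h r x)|} with hEjdef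
  have mEj : ∀ j, MeasurableSet (Ej j) := fun j =>
    measurableSet_le measurable_const (hIm 0 (p j)).abs
  have hEj_bound : ∀ j, μ (Ej j) ≤ ENNReal.ofReal (w⁻¹ * ((u j)⁻¹ - (u (j+1))⁻¹)) := by
    intro j
    have hEeq : Ej j
        = {x | ENNReal.ofReal (lam j) ≤ (‖∫ r in (0:ℝ)..p j, f (h r x)‖₊ : ℝ≥0∞)} := by
      ext x
      simp only [hEjdef, Set.mem_setOf_eq]
      rw [← ENNReal.ofReal_coe_nnreal, coe_nnnorm, Real.norm_eq_abs]
      exact (ENNReal.ofReal_le_ofReal_iff (abs_nonneg _)).symm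
    have hcheb := meas_ge_le_mul_pow_eLpNorm_enorm (μ := μ) two_ne_zero ENNReal.ofNat_ne_top
      (hIm 0 (p j)).aestronglyMeasurable (ε := ENNReal.ofReal (lam j))
      (ENNReal.ofReal_pos.mpr (hlam0 j)).ne' (fun h => absurd h ENNReal.ofReal_ne_top)
    rw [hEeq]
    refine le_trans hcheb ?_
    have htwo : ((2:ℝ≥0∞)).toReal = (2:ℝ) := by simp
    rw [htwo]
    have hrw : eLpNorm (fun x => ∫ r in (0:ℝ)..p j, f (h r x)) 2 μ ^ (2:ℝ)
        = eLpNorm (fun x => ∫ r in (0:ℝ)..p j, f (h r x)) 2 μ ^ (2:ℕ) := by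
      rw [show ((2:ℝ)) = ((2:ℕ):ℝ) by norm_num, ENNReal.rpow_natCast]
    have hinv : (ENNReal.ofReal (lam j))⁻¹ ^ (2:ℝ) = ENNReal.ofReal (((lam j)⁻¹)^2) := by
      calc (ENNReal.ofReal (lam j))⁻¹ ^ (2:ℝ)
          = (ENNReal.ofReal ((lam j)⁻¹)) ^ (2:ℝ) := by
            rw [ENNReal.ofReal_inv_of_pos (hlam0 j)]
        _ = (ENNReal.ofReal ((lam j)⁻¹)) ^ (2:ℕ) := by
            rw [show ((2:ℝ)) = ((2:ℕ):ℝ) by norm_num, ENNReal.rpow_natCast]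
        _ = ENNReal.ofReal (((lam j)⁻¹)^2) := (ENNReal.ofReal_pow (by positivity) 2).symm
    rw [hrw, hinv]
    -- the key real inequality
    set P : ℝ := p j ^ (2-2*γ) with hPdef
    have hPpos : 0 < P := Real.rpow_pos_of_pos (hp0 j) _
    have hreal : ((lam j)⁻¹)^2 * (B'*S^2*(p j)^(2-β₀)) ≤ w⁻¹ * ((u j)⁻¹ - (u (j+1))⁻¹) := by
      have e : (p j ^ ((1:ℝ)-γ))^2 = P := by
        rw [sq, ← Real.rpow_add (hp0 j), hPdef]
        norm_num
        ring_nf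
      have hlam2 : ((lam j)⁻¹)^2 = (K^2 * S^2 * P)⁻¹ := by
        rw [inv_pow, ← e]
        congr 1
        simp only [hlamdef]
        ring
      have hp2 : p j ^ (2-β₀) = P * ((w * u j)⁻¹)^2 := by
        have e1 : (2:ℝ) - β₀ = (2-2*γ) + (-(γ*2)) := by rw [hγdef]; ring
        rw [e1, Real.rpow_add (hp0 j), ← hPdef]
        congr 1
        rw [Real.rpow_neg (hp0 j).le, Real.rpow_mul (hp0 j).le,
          show ((2:ℝ)) = ((2:ℕ):ℝ) by norm_num, Real.rpow_natCast, hpγ j, inv_pow]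
      rw [hlam2, hp2, husucc j]
      exact aux_real_ineq hB' hγ0 hS hPpos hw1 (hu1 j) hc0 hcdef hK2
    calc ENNReal.ofReal (((lam j)⁻¹)^2)
          * eLpNorm (fun x => ∫ r in (0:ℝ)..p j, f (h r x)) 2 μ ^ (2:ℕ)
        ≤ ENNReal.ofReal (((lam j)⁻¹)^2) * ENNReal.ofReal (B'*S^2*(p j)^(2-β₀)) :=
          mul_le_mul_right (hL2 (p j) (hp1 j)) _
      _ = ENNReal.ofReal (((lam j)⁻¹)^2 * (B'*S^2*(p j)^(2-β₀))) :=
          (ENNReal.ofReal_mul (by positivity)).symm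
      _ ≤ ENNReal.ofReal (w⁻¹ * ((u j)⁻¹ - (u (j+1))⁻¹)) := ENNReal.ofReal_le_ofReal hreal
  -- total measure of the union
  have hUnion : μ (⋃ j, Ej j) ≤ ENNReal.ofReal (T₀ ^ (-γ)) := by
    refine le_trans (measure_iUnion_le _) ?_
    refine le_trans (ENNReal.tsum_le_tsum hEj_bound) ?_
    apply ENNReal.tsum_le_of_sum_range_le
    intro n
    have hnn : ∀ j : ℕ, 0 ≤ w⁻¹ * ((u j)⁻¹ - (u (j+1))⁻¹) := by
      intro j
      have h1 : (u (j+1))⁻¹ ≤ (u j)⁻¹ := by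
        apply inv_anti₀ (hu0 j)
        rw [husucc]; linarith
      have h2 : (0:ℝ) ≤ w⁻¹ := by positivity
      nlinarith
    rw [← ENNReal.ofReal_sum_of_nonneg (fun j _ => hnn j)]
    apply ENNReal.ofReal_le_ofReal
    have hsum : ∑ j ∈ Finset.range n, w⁻¹ * ((u j)⁻¹ - (u (j+1))⁻¹)
        = w⁻¹ * ((u 0)⁻¹ - (u n)⁻¹) := by
      rw [← Finset.mul_sum, Finset.sum_range_sub' (fun j => (u j)⁻¹)]
    rw [hsum, hwinv]
    have hu0eq : u 0 = 1 := by simp [hudef]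
    have h1 : 0 ≤ (u n)⁻¹ := by positivity
    have h2 : 0 ≤ w⁻¹ := by positivity
    rw [hu0eq]
    nlinarith
  -- the exceptional set
  refine ⟨N ∪ ⋃ j, Ej j, mN.union (MeasurableSet.iUnion mEj), ?_, ?_⟩
  · calc μ (N ∪ ⋃ j, Ej j) ≤ μ N + μ (⋃ j, Ej j) := measure_union_le _ _
      _ = μ (⋃ j, Ej j) := by rw [hN0, zero_add]
      _ ≤ ENNReal.ofReal (T₀ ^ (-γ)) := hUnion
  -- final pointwise bound
  intro t ht x hx
  have hxN : x ∉ N := fun hc' => hx (Set.mem_union_left _ hc')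
  have hxE : ∀ j, x ∉ Ej j := fun j hc' =>
    hx (Set.mem_union_right _ (Set.mem_iUnion.mpr ⟨j, hc'⟩))
  obtain ⟨j, hjl, hjr⟩ := hex t ht
  have ht0 : 0 < t := lt_of_lt_of_le hT₀0 ht
  have hsplit : (∫ r in (0:ℝ)..p j, f (h r x)) + (∫ r in p j..t, f (h r x))
      = ∫ r in (0:ℝ)..t, f (h r x) :=
    integral_add_adjacent_intervals (hInt x 0 (p j)) (hInt x (p j) t)
  have h1 : |∫ r in (0:ℝ)..p j, f (h r x)| ≤ lam j := by
    by_contra hcon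
    push_neg at hcon
    exact hxE j (le_of_lt hcon)
  have h2 : |∫ r in p j..t, f (h r x)| ≤ L * (t - p j) :=
    aux_interval_bound (hNae x hxN) hjl (hInt x (p j) t)
  have htpow : 0 < t ^ (1-γ) := Real.rpow_pos_of_pos ht0 _
  have h3 : t - p j ≤ 3 * t ^ (1-γ) := by
    have e1 : t - p j ≤ p (j+1) - p j := by linarith [hjr]
    have e2 : p (j+1) ^ (1-γ) ≤ (3 * t) ^ (1-γ) := by
      apply Real.rpow_le_rpow (hp0 _).le _ (by linarith)
      calc p (j+1) ≤ 3 * p j := hratio j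
        _ ≤ 3 * t := by linarith
    have e3 : (3*t) ^ ((1:ℝ)-γ) = 3 ^ ((1:ℝ)-γ) * t ^ ((1:ℝ)-γ) :=
      Real.mul_rpow (by norm_num) ht0.le
    have e4 : (3:ℝ) ^ ((1:ℝ)-γ) ≤ 3 := by
      calc (3:ℝ) ^ ((1:ℝ)-γ) ≤ 3 ^ (1:ℝ) :=
            Real.rpow_le_rpow_of_exponent_le (by norm_num) (by linarith)
        _ = 3 := Real.rpow_one 3
    have e5 : (3:ℝ) ^ ((1:ℝ)-γ) * t ^ ((1:ℝ)-γ) ≤ 3 * t ^ ((1:ℝ)-γ) := by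
      nlinarith [htpow]
    have e2' : p (j+1) ^ ((1:ℝ)-γ) ≤ 3 ^ ((1:ℝ)-γ) * t ^ ((1:ℝ)-γ) := by
      rw [← e3]; exact e2
    linarith [hgap j, e1, e2', e5]
  have h4 : p j ^ ((1:ℝ)-γ) ≤ t ^ ((1:ℝ)-γ) :=
    Real.rpow_le_rpow (hp0 j).le hjl (by linarith)
  have hfinal : |∫ r in (0:ℝ)..t, f (h r x)| ≤ (K + 3) * (S + L) * t ^ (1-γ) := by
    rw [← hsplit]
    have habs : |(∫ r in (0:ℝ)..p j, f (h r x)) + (∫ r in p j..t, f (h r x))|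
        ≤ |∫ r in (0:ℝ)..p j, f (h r x)| + |∫ r in p j..t, f (h r x)| := abs_add_le _ _
    have hlamle : lam j ≤ K * S * t ^ (1-γ) := by
      simp only [hlamdef]
      exact mul_le_mul_of_nonneg_left h4 (by positivity)
    have hLt : L * (t - p j) ≤ L * (3 * t ^ (1-γ)) := by nlinarith [h3, hL0]
    have : |∫ r in (0:ℝ)..p j, f (h r x)| + |∫ r in p j..t, f (h r x)|
        ≤ K * S * t^(1-γ) + L * (3 * t^(1-γ)) :=
      add_le_add (h1.trans hlamle) (h2.trans hLt)
    refine le_trans habs (le_trans this ?_)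
    nlinarith [htpow, hKpos, hS, hL0,
      mul_nonneg (mul_nonneg hKpos.le hL0) htpow.le,
      mul_nonneg (mul_nonneg (by norm_num : (0:ℝ) ≤ 3) hS.le) htpow.le]
  exact hfinal
end

section
/- Let τ̃ : ℝ × ℝ → ℝ and a : ℝ × ℝ → ℝ be continuously differentiable functions with τ̃(r,s) > 0 for all (r,s), and suppose that for all (r,s) ∈ ℝ²: ∂_r τ̃(r,s) = a(r,s) − τ̃(r,s) + ∂_s(s · τ̃(r,s)). Fix t ∈ ℝ and let u : ℝ → ℝ be a differentiable function such that t = ∫₀^{u(r)} τ̃(r,s) ds for all r ∈ ℝ. Define v(r) = t − ∫₀^{u(r)} a(r,s) ds. Then for every r ∈ ℝ, d/dr ( e^r u(r) ) = e^r v(r) / τ̃(r, u(r)). -/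
open MeasureTheory intervalIntegral Asymptotics Filter

/-- partial derivative slice -/
lemma slice_hasDerivAt (f : ℝ × ℝ → ℝ) (hf : ContDiff ℝ 1 f) (s x : ℝ) :
    HasDerivAt (fun r => f (r, s)) (fderiv ℝ f (x, s) (1, 0)) x := by
  have h1 : HasDerivAt (fun r : ℝ => (r, s)) ((1 : ℝ), (0 : ℝ)) x :=
    (hasDerivAt_id x).prodMk (hasDerivAt_const x s)
  exact (hf.differentiable one_ne_zero (x, s)).hasFDerivAt.comp_hasDerivAt x h1

lemma param_hasDerivAt (f : ℝ × ℝ → ℝ) (hf : ContDiff ℝ 1 f) (r₀ y₀ : ℝ) :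
    HasDerivAt (fun r => ∫ s in (0:ℝ)..y₀, f (r, s))
      (∫ s in (0:ℝ)..y₀, fderiv ℝ f (r₀, s) (1, 0)) r₀ := by
  have hfc : Continuous f := hf.continuous
  have hgc : Continuous (fun p : ℝ × ℝ => fderiv ℝ f p (1, 0)) :=
    (hf.continuous_fderiv one_ne_zero).clm_apply continuous_const
  obtain ⟨C, hC⟩ : ∃ C, ∀ p ∈ (Metric.closedBall r₀ 1) ×ˢ (Set.uIcc (0:ℝ) y₀),
      ‖fderiv ℝ f p (1, 0)‖ ≤ C :=
    ((isCompact_closedBall r₀ 1).prod isCompact_uIcc).exists_bound_of_continuousOn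
      hgc.continuousOn
  refine (intervalIntegral.hasDerivAt_integral_of_dominated_loc_of_deriv_le
    (F := fun r s => f (r, s)) (F' := fun r s => fderiv ℝ f (r, s) (1, 0))
    (bound := fun _ => C) (Metric.ball_mem_nhds r₀ one_pos) ?_ ?_ ?_ ?_ ?_ ?_).2
  · exact Filter.Eventually.of_forall fun x =>
      (hfc.comp (Continuous.prodMk_right x)).aestronglyMeasurable
  · exact (hfc.comp (Continuous.prodMk_right r₀)).intervalIntegrable 0 y₀
  · exact (hgc.comp (Continuous.prodMk_right r₀)).aestronglyMeasurable
  · refine ae_of_all _ fun s hs x hx => hC (x, s) ?_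
    exact ⟨Metric.ball_subset_closedBall hx, Set.uIoc_subset_uIcc hs⟩
  · exact intervalIntegrable_const
  · exact ae_of_all _ fun s _ x _ => slice_hasDerivAt f hf s x

lemma primitive_hasFDerivAt (f : ℝ × ℝ → ℝ) (hf : ContDiff ℝ 1 f) (r₀ y₀ : ℝ) :
    HasFDerivAt (fun p : ℝ × ℝ => ∫ s in (0:ℝ)..p.2, f (p.1, s))
      ((∫ s in (0:ℝ)..y₀, fderiv ℝ f (r₀, s) (1, 0)) • ContinuousLinearMap.fst ℝ ℝ ℝ
        + f (r₀, y₀) • ContinuousLinearMap.snd ℝ ℝ ℝ) (r₀, y₀) := by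
  have hfc : Continuous f := hf.continuous
  set I : ℝ := ∫ s in (0:ℝ)..y₀, fderiv ℝ f (r₀, s) (1, 0) with hI
  set p₀ : ℝ × ℝ := (r₀, y₀) with hp₀
  rw [hasFDerivAt_iff_isLittleO]
  have hdecomp : ∀ p : ℝ × ℝ,
      (∫ s in (0:ℝ)..p.2, f (p.1, s)) - (∫ s in (0:ℝ)..y₀, f (r₀, s))
        - ((I • ContinuousLinearMap.fst ℝ ℝ ℝ
            + f (r₀, y₀) • ContinuousLinearMap.snd ℝ ℝ ℝ) (p - p₀))
      = ((∫ s in (0:ℝ)..y₀, f (p.1, s)) - (∫ s in (0:ℝ)..y₀, f (r₀, s)) - (p.1 - r₀) * I)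
        + ((∫ s in y₀..p.2, f (p.1, s)) - f (r₀, y₀) * (p.2 - y₀)) := by
    intro p
    have hsplit : (∫ s in (0:ℝ)..y₀, f (p.1, s)) + (∫ s in y₀..p.2, f (p.1, s))
        = ∫ s in (0:ℝ)..p.2, f (p.1, s) :=
      intervalIntegral.integral_add_adjacent_intervals
        ((hfc.comp (Continuous.prodMk_right p.1)).intervalIntegrable 0 y₀)
        ((hfc.comp (Continuous.prodMk_right p.1)).intervalIntegrable y₀ p.2)
    simp only [ContinuousLinearMap.add_apply, ContinuousLinearMap.smul_apply,
      ContinuousLinearMap.coe_fst', ContinuousLinearMap.coe_snd', Prod.fst_sub, Prod.snd_sub,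
      smul_eq_mul, hp₀]
    rw [← hsplit]; ring
  have h1 : (fun p : ℝ × ℝ =>
      (∫ s in (0:ℝ)..y₀, f (p.1, s)) - (∫ s in (0:ℝ)..y₀, f (r₀, s)) - (p.1 - r₀) * I)
      =o[nhds p₀] fun p => p - p₀ := by
    have hA := hasDerivAt_iff_isLittleO.mp (param_hasDerivAt f hf r₀ y₀)
    have hfst : Filter.Tendsto (fun p : ℝ × ℝ => p.1) (nhds p₀) (nhds r₀) :=
      continuous_fst.continuousAt
    have hcomp := hA.comp_tendsto hfst
    have hO : ((fun x' => x' - r₀) ∘ fun p : ℝ × ℝ => p.1) =O[nhds p₀] fun p => p - p₀ := by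
      refine Asymptotics.isBigO_of_le _ fun p => ?_
      exact norm_fst_le (p - p₀)
    have hfin := hcomp.trans_isBigO hO
    simpa [Function.comp_def, smul_eq_mul, mul_comm, ← hI] using hfin
  have h2 : (fun p : ℝ × ℝ => (∫ s in y₀..p.2, f (p.1, s)) - f (r₀, y₀) * (p.2 - y₀))
      =o[nhds p₀] fun p => p - p₀ := by
    rw [Asymptotics.isLittleO_iff]
    intro ε hε
    obtain ⟨δ, hδ, hcont⟩ := Metric.continuousAt_iff.mp hfc.continuousAt ε hε
    have hball : Metric.ball p₀ δ ∈ nhds p₀ := Metric.ball_mem_nhds _ hδ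
    filter_upwards [hball] with p hp
    have hdist : dist p p₀ < δ := Metric.mem_ball.mp hp
    have hre : (∫ s in y₀..p.2, f (p.1, s)) - f (r₀, y₀) * (p.2 - y₀)
        = ∫ s in y₀..p.2, (f (p.1, s) - f (r₀, y₀)) := by
      have hint : IntervalIntegrable (fun s => f (p.1, s)) volume y₀ p.2 :=
        (hfc.comp (Continuous.prodMk_right p.1)).intervalIntegrable y₀ p.2
      rw [intervalIntegral.integral_sub hint intervalIntegrable_const,
        intervalIntegral.integral_const, smul_eq_mul]
      ring
    rw [hre]
    have hbound : ∀ s ∈ Set.uIoc y₀ p.2, ‖f (p.1, s) - f (r₀, y₀)‖ ≤ ε := by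
      intro s hs
      have hs1 : |s - y₀| ≤ |p.2 - y₀| := by
        rcases Set.mem_uIoc.mp hs with h | h
        · rw [abs_of_nonneg (by linarith [h.1]), abs_of_pos (by linarith [h.1, h.2])]
          linarith [h.2]
        · rw [abs_of_nonpos (by linarith [h.2]), abs_of_neg (by linarith [h.1, h.2])]
          linarith [h.1]
      have hd : dist ((p.1, s) : ℝ × ℝ) p₀ < δ := by
        rw [Prod.dist_eq]
        have h1 : dist p.1 r₀ < δ := lt_of_le_of_lt (le_trans (le_max_left _ _)
          (le_of_eq (Prod.dist_eq (x := p) (y := p₀)).symm)) hdist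
        have h2 : dist s y₀ < δ := by
          have : dist p.2 y₀ < δ := lt_of_le_of_lt (le_trans (le_max_right _ _)
            (le_of_eq (Prod.dist_eq (x := p) (y := p₀)).symm)) hdist
          calc dist s y₀ = |s - y₀| := Real.dist_eq s y₀
            _ ≤ |p.2 - y₀| := hs1
            _ = dist p.2 y₀ := (Real.dist_eq p.2 y₀).symm
            _ < δ := this
        exact max_lt h1 h2
      have := hcont hd
      rw [Real.dist_eq] at this
      exact le_of_lt this
    calc ‖∫ s in y₀..p.2, (f (p.1, s) - f (r₀, y₀))‖
        ≤ ε * |p.2 - y₀| := intervalIntegral.norm_integral_le_of_norm_le_const hbound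
      _ ≤ ε * ‖p - p₀‖ := by
          apply mul_le_mul_of_nonneg_left _ (le_of_lt hε)
          have : p.2 - y₀ = (p - p₀).2 := rfl
          rw [this, ← Real.norm_eq_abs]
          exact norm_snd_le _
  have heq : (fun p : ℝ × ℝ => (∫ s in (0:ℝ)..p.2, f (p.1, s))
      - (∫ s in (0:ℝ)..p₀.2, f (p₀.1, s))
      - ((I • ContinuousLinearMap.fst ℝ ℝ ℝ
          + f (r₀, y₀) • ContinuousLinearMap.snd ℝ ℝ ℝ) (p - p₀)))
      = fun p =>
      ((∫ s in (0:ℝ)..y₀, f (p.1, s)) - (∫ s in (0:ℝ)..y₀, f (r₀, s)) - (p.1 - r₀) * I)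
        + ((∫ s in y₀..p.2, f (p.1, s)) - f (r₀, y₀) * (p.2 - y₀)) :=
    funext fun p => hdecomp p
  rw [heq]
  exact h1.add h2

/-- (Abstract Lemma 4.1.) If `τ, a : ℝ × ℝ → ℝ` are `C¹` with `τ > 0` and
`∂_r τ = a - τ + ∂_s (s·τ)`, and `u` is differentiable with `t = ∫₀^{u(r)} τ(r,s) ds` for all
`r`, then with `v(r) = t - ∫₀^{u(r)} a(r,s) ds` one has
`d/dr (e^r u(r)) = e^r v(r) / τ(r, u(r))`. -/
theorem deriv_exp_mul_timeChange_cocycle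
    (τ a : ℝ × ℝ → ℝ) (hτ : ContDiff ℝ 1 τ) (ha : ContDiff ℝ 1 a)
    (hτpos : ∀ p : ℝ × ℝ, 0 < τ p)
    (hstruct : ∀ r s : ℝ,
      deriv (fun r' => τ (r', s)) r =
        a (r, s) - τ (r, s) + deriv (fun s' => s' * τ (r, s')) s)
    (t : ℝ) (u : ℝ → ℝ) (hu : Differentiable ℝ u)
    (hu_def : ∀ r : ℝ, t = ∫ s in (0:ℝ)..(u r), τ (r, s))
    (v : ℝ → ℝ) (hv : ∀ r : ℝ, v r = t - ∫ s in (0:ℝ)..(u r), a (r, s)) :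
    ∀ r : ℝ,
      deriv (fun r' => Real.exp r' * u r') r = Real.exp r * v r / τ (r, u r) := by
  intro r₀
  have hτc : Continuous τ := hτ.continuous
  have hac : Continuous a := ha.continuous
  set y₀ : ℝ := u r₀ with hy₀
  set U : ℝ := deriv u r₀ with hU
  set I : ℝ := ∫ s in (0:ℝ)..y₀, fderiv ℝ τ (r₀, s) (1, 0) with hI
  -- derivative of the composed map
  have hγ : HasDerivAt (fun r => ((r, u r) : ℝ × ℝ)) ((1 : ℝ), U) r₀ :=
    (hasDerivAt_id r₀).prodMk (hu r₀).hasDerivAt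
  have hΦ := primitive_hasFDerivAt τ hτ r₀ y₀
  have hcomp : HasDerivAt (fun r => ∫ s in (0:ℝ)..(u r), τ (r, s))
      (I + τ (r₀, y₀) * U) r₀ := by
    have h := hΦ.comp_hasDerivAt r₀ hγ
    have hval : ((I • ContinuousLinearMap.fst ℝ ℝ ℝ
        + τ (r₀, y₀) • ContinuousLinearMap.snd ℝ ℝ ℝ) ((1 : ℝ), U))
        = I + τ (r₀, y₀) * U := by
      simp [ContinuousLinearMap.add_apply, ContinuousLinearMap.smul_apply, smul_eq_mul]
    rw [hval] at h
    exact h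
  -- the composed map is constant
  have hconst : (fun r => ∫ s in (0:ℝ)..(u r), τ (r, s)) = fun _ => t :=
    funext fun r => (hu_def r).symm
  have hzero : I + τ (r₀, y₀) * U = 0 := by
    rw [hconst] at hcomp
    exact hcomp.unique (hasDerivAt_const r₀ t)
  -- compute I
  have hm : ContDiff ℝ 1 (fun s : ℝ => s * τ (r₀, s)) := by
    exact contDiff_id.mul (hτ.comp (contDiff_const.prodMk contDiff_id))
  have hmd : Continuous (deriv (fun s : ℝ => s * τ (r₀, s))) :=
    hm.continuous_deriv le_rfl
  have hint_a : IntervalIntegrable (fun s => a (r₀, s)) volume 0 y₀ :=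
    (hac.comp (Continuous.prodMk_right r₀)).intervalIntegrable 0 y₀
  have hint_τ : IntervalIntegrable (fun s => τ (r₀, s)) volume 0 y₀ :=
    (hτc.comp (Continuous.prodMk_right r₀)).intervalIntegrable 0 y₀
  have hint_d : IntervalIntegrable (deriv (fun s : ℝ => s * τ (r₀, s))) volume 0 y₀ :=
    hmd.intervalIntegrable 0 y₀
  have hIeq : I = (∫ s in (0:ℝ)..y₀, a (r₀, s)) - (∫ s in (0:ℝ)..y₀, τ (r₀, s))
      + ∫ s in (0:ℝ)..y₀, deriv (fun s' : ℝ => s' * τ (r₀, s')) s := by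
    rw [hI]
    rw [show (fun s => fderiv ℝ τ (r₀, s) (1, 0))
        = fun s => a (r₀, s) - τ (r₀, s) + deriv (fun s' : ℝ => s' * τ (r₀, s')) s from
      funext fun s => by
        rw [← (slice_hasDerivAt τ hτ s r₀).deriv]; exact hstruct r₀ s]
    rw [intervalIntegral.integral_add (hint_a.sub hint_τ) hint_d,
      intervalIntegral.integral_sub hint_a hint_τ]
  have hFTC : (∫ s in (0:ℝ)..y₀, deriv (fun s' : ℝ => s' * τ (r₀, s')) s)
      = y₀ * τ (r₀, y₀) := by
    rw [intervalIntegral.integral_deriv_eq_sub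
      (fun x _ => (hm.differentiable one_ne_zero).differentiableAt) hint_d]
    ring
  have hτval : (∫ s in (0:ℝ)..y₀, τ (r₀, s)) = t := (hu_def r₀).symm
  have haval : (∫ s in (0:ℝ)..y₀, a (r₀, s)) = t - v r₀ := by
    rw [hv r₀]; ring
  have hIval : I = -(v r₀) + y₀ * τ (r₀, y₀) := by
    rw [hIeq, hFTC, hτval, haval]; ring
  have hτne : τ (r₀, y₀) ≠ 0 := ne_of_gt (hτpos (r₀, y₀))
  have hUval : U = v r₀ / τ (r₀, y₀) - y₀ := by
    rw [hIval] at hzero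
    field_simp
    linarith [hzero]
  have hfinal : HasDerivAt (fun r' => Real.exp r' * u r')
      (Real.exp r₀ * u r₀ + Real.exp r₀ * U) r₀ :=
    (Real.hasDerivAt_exp r₀).mul (hu r₀).hasDerivAt
  rw [hfinal.deriv, hUval]
  field_simp
  ring
end

section
/- Let τ̃ : ℝ × ℝ → ℝ and a : ℝ × ℝ → ℝ be continuously differentiable functions with τ̃(r,s) > 0 for all (r,s), and suppose that for all (r,s) ∈ ℝ²: ∂_r τ̃(r,s) = a(r,s) − τ̃(r,s) + ∂_s(s · τ̃(r,s)). Fix t ∈ ℝ and let u : ℝ → ℝ be a differentiable function such that t = ∫₀^{u(r)} τ̃(r,s) ds for all r ∈ ℝ. Then for every r ∈ ℝ, u'(r) = −(τ̃(r, u(r)))⁻¹ · ( ∫₀^{u(r)} a(r,s) ds − t ) − u(r). -/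
open MeasureTheory intervalIntegral Metric Set

/-- (Abstract equation (eq:du).) Under the same structural hypotheses as in
Lemma 4.1, the derivative of the reparametrization cocycle satisfies
`u'(r) = -(τ(r,u(r)))⁻¹ (∫₀^{u(r)} a(r,s) ds - t) - u(r)`. -/
theorem deriv_timeChange_cocycle_eq
    (τ a : ℝ × ℝ → ℝ) (hτ : ContDiff ℝ 1 τ) (ha : ContDiff ℝ 1 a)
    (hτpos : ∀ p : ℝ × ℝ, 0 < τ p)
    (hstruct : ∀ r s : ℝ,
      deriv (fun r' => τ (r', s)) r =
        a (r, s) - τ (r, s) + deriv (fun s' => s' * τ (r, s')) s)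
    (t : ℝ) (u : ℝ → ℝ) (hu : Differentiable ℝ u)
    (hu_def : ∀ r : ℝ, t = ∫ s in (0:ℝ)..(u r), τ (r, s)) :
    ∀ r : ℝ,
      deriv u r = -(τ (r, u r))⁻¹ * ((∫ s in (0:ℝ)..(u r), a (r, s)) - t) - u r := by
  intro r₀
  set y₀ : ℝ := u r₀ with hy₀
  have hτdiff : Differentiable ℝ τ := hτ.differentiable one_ne_zero
  have hτc : Continuous τ := hτ.continuous
  have hac : Continuous a := ha.continuous
  have hfc : Continuous (fderiv ℝ τ) := hτ.continuous_fderiv one_ne_zero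
  set d1 : ℝ × ℝ → ℝ := fun p => fderiv ℝ τ p (1, 0) with hd1
  set d2 : ℝ × ℝ → ℝ := fun p => fderiv ℝ τ p (0, 1) with hd2
  have hd1c : Continuous d1 := hfc.clm_apply continuous_const
  have hd2c : Continuous d2 := hfc.clm_apply continuous_const
  have hpart1 : ∀ r s : ℝ, HasDerivAt (fun r' => τ (r', s)) (d1 (r, s)) r := by
    intro r s
    have h1 : HasDerivAt (fun r' : ℝ => (r', s)) ((1 : ℝ), (0 : ℝ)) r :=
      (hasDerivAt_id r).prodMk (hasDerivAt_const r s)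
    exact (hτdiff (r, s)).hasFDerivAt.comp_hasDerivAt r h1
  have hpart2 : ∀ r s : ℝ, HasDerivAt (fun s' => τ (r, s')) (d2 (r, s)) s := by
    intro r s
    have h1 : HasDerivAt (fun s' : ℝ => (r, s')) ((0 : ℝ), (1 : ℝ)) s :=
      (hasDerivAt_const s r).prodMk (hasDerivAt_id s)
    exact (hτdiff (r, s)).hasFDerivAt.comp_hasDerivAt s h1
  have hτc1 : ∀ r : ℝ, Continuous (fun s => τ (r, s)) := fun r =>
    hτc.comp (continuous_const.prodMk continuous_id)
  have hac1 : Continuous (fun s => a (r₀, s)) :=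
    hac.comp (continuous_const.prodMk continuous_id)
  have hτint : ∀ r x y : ℝ, IntervalIntegrable (fun s => τ (r, s)) volume x y :=
    fun r x y => (hτc1 r).intervalIntegrable x y
  -- the parametric integral with fixed limits
  set A : ℝ := ∫ s in (0:ℝ)..y₀, d1 (r₀, s) with hA
  have hGderiv : HasDerivAt (fun r => ∫ s in (0:ℝ)..y₀, τ (r, s)) A r₀ := by
    obtain ⟨C, hC⟩ := ((isCompact_closedBall r₀ 1).prod
      (isCompact_uIcc (a := (0:ℝ)) (b := y₀))).exists_bound_of_continuousOn hd1c.continuousOn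
    exact (hasDerivAt_integral_of_dominated_loc_of_deriv_le (F := fun x s => τ (x, s))
      (F' := fun x s => d1 (x, s)) (bound := fun _ => C) (Metric.ball_mem_nhds r₀ one_pos)
      (Filter.Eventually.of_forall fun x => (hτc1 x).aestronglyMeasurable)
      (hτint r₀ 0 y₀)
      ((hd1c.comp (continuous_const.prodMk continuous_id)).aestronglyMeasurable)
      (Filter.Eventually.of_forall fun s hs x hx =>
        hC (x, s) ⟨ball_subset_closedBall hx, uIoc_subset_uIcc hs⟩)
      intervalIntegrable_const
      (Filter.Eventually.of_forall fun s _ x _ => hpart1 x s)).2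
  -- the moving endpoint (frozen parameter) part
  have hQ : HasDerivAt (fun y => ∫ s in y₀..y, τ (r₀, s)) (τ (r₀, y₀)) y₀ :=
    integral_hasDerivAt_right (hτint r₀ y₀ y₀)
      ((hτc1 r₀).stronglyMeasurable.stronglyMeasurableAtFilter)
      (hτc1 r₀).continuousAt
  have hQu : HasDerivAt (fun r => ∫ s in y₀..(u r), τ (r₀, s))
      (τ (r₀, y₀) * deriv u r₀) r₀ := hQ.comp r₀ (hu r₀).hasDerivAt
  -- the remainder term
  set E : ℝ → ℝ := fun r => ∫ s in y₀..(u r), (τ (r, s) - τ (r₀, s)) with hE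
  have hEderiv : HasDerivAt E 0 r₀ := by
    obtain ⟨C₂, hC₂⟩ := ((isCompact_closedBall r₀ 1).prod
      (isCompact_closedBall y₀ 1)).exists_bound_of_continuousOn hfc.continuousOn
    have hC₂0 : 0 ≤ C₂ := le_trans (norm_nonneg _)
      (hC₂ (r₀, y₀) ⟨mem_closedBall_self one_pos.le, mem_closedBall_self one_pos.le⟩)
    have hlip : ∀ r ∈ closedBall r₀ 1, ∀ s ∈ closedBall y₀ 1,
        ‖τ (r, s) - τ (r₀, s)‖ ≤ C₂ * ‖r - r₀‖ := by
      intro r hr s hs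
      have hconv : Convex ℝ ((closedBall r₀ 1) ×ˢ (closedBall y₀ 1)) :=
        (convex_closedBall _ _).prod (convex_closedBall _ _)
      have := hconv.norm_image_sub_le_of_norm_fderiv_le (fun p _ => hτdiff p)
        (fun p hp => hC₂ p hp)
        (Set.mk_mem_prod (mem_closedBall_self one_pos.le) hs) (Set.mk_mem_prod hr hs)
      calc ‖τ (r, s) - τ (r₀, s)‖ ≤ C₂ * ‖((r, s) : ℝ × ℝ) - (r₀, s)‖ := this
        _ = C₂ * ‖r - r₀‖ := by
            have : ((r, s) : ℝ × ℝ) - (r₀, s) = (r - r₀, 0) := by simp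
            rw [this, Prod.norm_def]
            simp [max_eq_left (norm_nonneg (r - r₀))]
    have hEbd : ∀ r ∈ closedBall r₀ 1, dist (u r) y₀ ≤ 1 →
        ‖E r‖ ≤ C₂ * ‖r - r₀‖ * |u r - y₀| := by
      intro r hr hur
      refine intervalIntegral.norm_integral_le_of_norm_le_const ?_
      intro s hs
      refine hlip r hr s ?_
      have := abs_sub_left_of_mem_uIcc (uIoc_subset_uIcc hs)
      rw [mem_closedBall, Real.dist_eq]
      rw [Real.dist_eq] at hur
      linarith
    rw [hasDerivAt_iff_isLittleO]
    have hE0 : E r₀ = 0 := by simp [hE]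
    simp only [hE0, sub_zero, smul_zero]
    rw [Asymptotics.isLittleO_iff]
    intro c hc
    have hδ : (0:ℝ) < min 1 (c / (C₂ + 1)) :=
      lt_min one_pos (div_pos hc (by linarith))
    have h1 : ∀ᶠ r in nhds r₀, r ∈ closedBall r₀ 1 :=
      Metric.closedBall_mem_nhds r₀ one_pos
    have h2 : ∀ᶠ r in nhds r₀, u r ∈ closedBall y₀ (min 1 (c / (C₂ + 1))) :=
      (hu r₀).continuousAt.tendsto.eventually_mem (Metric.closedBall_mem_nhds y₀ hδ)
    filter_upwards [h1, h2] with r hr1 hr2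
    rw [mem_closedBall, Real.dist_eq] at hr2
    have hub : |u r - y₀| ≤ c / (C₂ + 1) := le_trans hr2 (min_le_right _ _)
    have hub1 : dist (u r) y₀ ≤ 1 := by
      rw [Real.dist_eq]; exact le_trans hr2 (min_le_left _ _)
    calc ‖E r‖ ≤ C₂ * ‖r - r₀‖ * |u r - y₀| := hEbd r hr1 hub1
      _ ≤ C₂ * ‖r - r₀‖ * (c / (C₂ + 1)) := by
          apply mul_le_mul_of_nonneg_left hub
          positivity
      _ = (C₂ * (C₂ + 1)⁻¹) * (c * ‖r - r₀‖) := by rw [div_eq_mul_inv]; ring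
      _ ≤ 1 * (c * ‖r - r₀‖) := by
          have h3 : C₂ * (C₂ + 1)⁻¹ ≤ 1 := by
            rw [mul_inv_le_iff₀ (by linarith)]; linarith
          exact mul_le_mul_of_nonneg_right h3 (by positivity)
      _ = c * ‖r - r₀‖ := one_mul _
  -- splitting identity
  have hsplit : ∀ r : ℝ, (∫ s in (0:ℝ)..(u r), τ (r, s)) =
      (∫ s in (0:ℝ)..y₀, τ (r, s)) + (∫ s in y₀..(u r), τ (r₀, s)) + E r := by
    intro r
    have hadd : (∫ s in y₀..(u r), τ (r, s)) =
        (∫ s in y₀..(u r), τ (r₀, s)) + E r := by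
      rw [hE, ← intervalIntegral.integral_add (f := fun s => τ (r₀, s))
        (g := fun s => τ (r, s) - τ (r₀, s)) (hτint r₀ y₀ (u r))
        (((hτc1 r).sub (hτc1 r₀)).intervalIntegrable y₀ (u r) :
          IntervalIntegrable (fun s => τ (r, s) - τ (r₀, s)) volume y₀ (u r))]
      congr 1; funext s; ring
    rw [← intervalIntegral.integral_add_adjacent_intervals (hτint r 0 y₀)
      (hτint r y₀ (u r)), hadd, add_assoc]
  have hconsteq : (fun r => (∫ s in (0:ℝ)..y₀, τ (r, s)) +
      (∫ s in y₀..(u r), τ (r₀, s)) + E r) = fun _ => t := by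
    funext r
    rw [← hsplit r, ← hu_def r]
  have hsum : HasDerivAt (fun _ : ℝ => t) (A + τ (r₀, y₀) * deriv u r₀ + 0) r₀ := by
    rw [← hconsteq]
    exact (hGderiv.add hQu).add hEderiv
  have h0 : A + τ (r₀, y₀) * deriv u r₀ + 0 = 0 :=
    hsum.unique (hasDerivAt_const r₀ t)
  -- compute A
  have hg' : ∀ s : ℝ, HasDerivAt (fun s' => s' * τ (r₀, s'))
      (τ (r₀, s) + s * d2 (r₀, s)) s := by
    intro s
    have := (hasDerivAt_id' (x := s)).mul (hpart2 r₀ s)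
    simpa [one_mul, Pi.mul_def] using this
  have hd1eq : ∀ s : ℝ, d1 (r₀, s) =
      (a (r₀, s) - τ (r₀, s)) + (τ (r₀, s) + s * d2 (r₀, s)) := by
    intro s
    rw [← (hpart1 r₀ s).deriv, hstruct r₀ s, (hg' s).deriv]
  have hg'c : Continuous (fun s => τ (r₀, s) + s * d2 (r₀, s)) :=
    (hτc1 r₀).add (continuous_id.mul (hd2c.comp (continuous_const.prodMk continuous_id)))
  have hAval : A = (∫ s in (0:ℝ)..y₀, a (r₀, s)) - t + y₀ * τ (r₀, y₀) := by
    have hint1 : IntervalIntegrable (fun s => a (r₀, s) - τ (r₀, s)) volume 0 y₀ :=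
      (hac1.sub (hτc1 r₀)).intervalIntegrable 0 y₀
    have hint2 : IntervalIntegrable (fun s => τ (r₀, s) + s * d2 (r₀, s)) volume 0 y₀ :=
      hg'c.intervalIntegrable 0 y₀
    have e1 : A = (∫ s in (0:ℝ)..y₀, (a (r₀, s) - τ (r₀, s))) +
        ∫ s in (0:ℝ)..y₀, (τ (r₀, s) + s * d2 (r₀, s)) := by
      rw [hA, ← intervalIntegral.integral_add hint1 hint2]
      congr 1; funext s; rw [hd1eq s]
    have e2 : (∫ s in (0:ℝ)..y₀, (τ (r₀, s) + s * d2 (r₀, s))) = y₀ * τ (r₀, y₀) := by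
      rw [intervalIntegral.integral_eq_sub_of_hasDerivAt (fun s _ => hg' s) hint2]
      simp
    have e3 : (∫ s in (0:ℝ)..y₀, (a (r₀, s) - τ (r₀, s))) =
        (∫ s in (0:ℝ)..y₀, a (r₀, s)) - t := by
      rw [intervalIntegral.integral_sub
        (hac1.intervalIntegrable 0 y₀)
        (hτint r₀ 0 y₀), ← hu_def r₀]
    rw [e1, e2, e3]
  -- final algebra
  have hτne : τ (r₀, y₀) ≠ 0 := (hτpos _).ne'
  have : deriv u r₀ = -A / τ (r₀, y₀) := by
    rw [eq_div_iff hτne]; linarith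
  rw [this, hAval]
  field_simp
  ring
end

section
/- Let (h_t)_{t∈ℝ} and (φ_r)_{r∈ℝ} be measurable flows on a probability space (M, μ) satisfying the commutation relation h_t(φ_r(x)) = φ_r(h_{e^r t}(x)) for all x ∈ M and t, r ∈ ℝ. Let m ≥ 1, let τ : M → ℝ be measurable with m⁻¹ ≤ τ ≤ m, and let u : M × ℝ → ℝ be the time-change cocycle for τ over (h_t). Let ψ : M → ℝ be measurable with |ψ(x)| ≤ m for all x and |ψ(φ_r(x)) − ψ(x)| ≤ m r for all x ∈ M and r ∈ [0,1]. Let 0 < γ < 1 and D ≥ 0, and suppose that for every T₀ ≥ 1 there is a measurable set E(T₀) ⊆ M with μ(E(T₀)) ≤ T₀^{-γ} such that |∫₀^L ψ(h_s(x)) ds| ≤ D L^{1-γ} for all L ≥ T₀ and all x ∉ E(T₀). For x ∈ M, r, t ∈ ℝ define v(x,r,t) = t − ∫₀^{u(φ_r(x), t)} ψ(h_s(φ_r(x))) ds. Then there exists a constant C_v ≥ 1, depending only on m, γ and D, such that for every t₀ ≥ 1 there is a measurable set E_v(t₀) ⊆ M with μ(E_v(t₀)) ≤ C_v t₀^{-γ}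 such that for all t ≥ t₀, all x ∈ M \ E_v(t₀) and all r ∈ [0,1]: |v(x,r,t) − t| ≤ C_v (r t + t^{1-γ}). -/
open MeasureTheory intervalIntegral

lemma bdd_ii (f : ℝ → ℝ) (hf : Measurable f) (C : ℝ) (hC : ∀ s, |f s| ≤ C)
    (a b : ℝ) : IntervalIntegrable f volume a b := by
  rw [intervalIntegrable_iff]
  refine (integrableOn_const (C := C) ?_).mono' hf.aestronglyMeasurable
    (ae_of_all _ fun s => by simpa [Real.norm_eq_abs] using hC s)
  exact measure_Ioc_lt_top.ne

set_option maxHeartbeats 1000000 in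
/-- (Abstract Lemma 4.2, control on the shear.) Given commuting flows
`h_t ∘ φ_r = φ_r ∘ h_{e^r t}`, a time-change cocycle `u` for `τ` with `m⁻¹ ≤ τ ≤ m`, and a
bounded observable `ψ` whose ergodic integrals satisfy a polynomial bound off sets of small
measure, the shear function `v(x,r,t) = t - ∫₀^{u(φ_r x, t)} ψ(h_s(φ_r x)) ds` satisfies
`|v(x,r,t) - t| ≤ C_v (r t + t^{1-γ})` off a set of measure `≤ C_v t₀^{-γ}`, where `C_v ≥ 1`
depends only on `m`, `γ` and `D`. -/
theorem shear_control
    (m γ D : ℝ) (hm : 1 ≤ m) (hγ : 0 < γ) (hγ' : γ < 1) (hD : 0 ≤ D) :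
    ∃ Cv : ℝ, 1 ≤ Cv ∧
      ∀ (M : Type*) (_ : MeasurableSpace M) (μ : Measure M),
        IsProbabilityMeasure μ →
        ∀ h φ : ℝ → M → M,
          (∀ t : ℝ, Measurable (h t)) → h 0 = id →
          (∀ t s : ℝ, h (t + s) = h t ∘ h s) → Measurable (Function.uncurry h) →
          (∀ r : ℝ, Measurable (φ r)) → φ 0 = id →
          (∀ r s : ℝ, φ (r + s) = φ r ∘ φ s) → Measurable (Function.uncurry φ) →
          (∀ (x : M) (t r : ℝ), h t (φ r x) = φ r (h (Real.exp r * t) x)) →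
          ∀ τ : M → ℝ, Measurable τ → (∀ x, m⁻¹ ≤ τ x) → (∀ x, τ x ≤ m) →
          ∀ u : M → ℝ → ℝ,
            (∀ (x : M) (t : ℝ), t = ∫ s in (0:ℝ)..(u x t), τ (h s x)) →
          ∀ ψ : M → ℝ, Measurable ψ → (∀ x, |ψ x| ≤ m) →
            (∀ x : M, ∀ r ∈ Set.Icc (0:ℝ) 1, |ψ (φ r x) - ψ x| ≤ m * r) →
            (∀ T₀ : ℝ, 1 ≤ T₀ →
              ∃ E : Set M, MeasurableSet E ∧ μ E ≤ ENNReal.ofReal (T₀ ^ (-γ)) ∧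
                ∀ L : ℝ, T₀ ≤ L → ∀ x ∉ E,
                  |∫ s in (0:ℝ)..L, ψ (h s x)| ≤ D * L ^ (1 - γ)) →
            ∀ t₀ : ℝ, 1 ≤ t₀ →
              ∃ Ev : Set M, MeasurableSet Ev ∧
                μ Ev ≤ ENNReal.ofReal (Cv * t₀ ^ (-γ)) ∧
                ∀ t : ℝ, t₀ ≤ t → ∀ x ∉ Ev, ∀ r ∈ Set.Icc (0:ℝ) 1,
                  |(t - ∫ s in (0:ℝ)..(u (φ r x) t), ψ (h s (φ r x))) - t| ≤
                    Cv * (r * t + t ^ (1 - γ)) := by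
  have hm0 : (0:ℝ) < m := lt_of_lt_of_le one_pos hm
  have he1 : (1:ℝ) ≤ Real.exp 1 := by
    have := Real.add_one_le_exp (1:ℝ); linarith
  have hDem : (0:ℝ) ≤ D * Real.exp 1 * m :=
    mul_nonneg (mul_nonneg hD (Real.exp_pos 1).le) hm0.le
  have hmsq : (1:ℝ) ≤ m ^ 2 := by nlinarith
  set Cv : ℝ := m ^ 2 + D * Real.exp 1 * m + m with hCv
  have hCvm : m ≤ Cv := by rw [hCv]; linarith
  have hCv1 : 1 ≤ Cv := by rw [hCv]; linarith
  refine ⟨Cv, hCv1, ?_⟩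
  intro M _ μ _ h φ hmh h0 hadd hunch hmφ φ0 φadd huncφ hcomm
    τ hτm hτlo hτhi u hu ψ hψm hψbd hψlip herg t₀ ht₀
  have ht₀0 : (0:ℝ) < t₀ := lt_of_lt_of_le one_pos ht₀
  set T : ℝ := max 1 (t₀ / m) with hT
  have hT1 : (1:ℝ) ≤ T := le_max_left _ _
  obtain ⟨E, hEmeas, hEμ, hEbd⟩ := herg T hT1
  refine ⟨E, hEmeas, ?_, ?_⟩
  · -- measure bound
    refine hEμ.trans (ENNReal.ofReal_le_ofReal ?_)
    have hTpos : (0:ℝ) < T := lt_of_lt_of_le one_pos hT1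
    have h1 : t₀ ^ γ ≤ m * T ^ γ := by
      have ht : t₀ ≤ m * T := by
        have h2 : t₀ / m ≤ T := le_max_right _ _
        calc t₀ = m * (t₀ / m) := by field_simp
          _ ≤ m * T := by gcongr
      calc t₀ ^ γ ≤ (m * T) ^ γ :=
            Real.rpow_le_rpow ht₀0.le ht hγ.le
        _ = m ^ γ * T ^ γ := Real.mul_rpow hm0.le hTpos.le
        _ ≤ m * T ^ γ := by
            have hme : m ^ γ ≤ m ^ (1:ℝ) :=
              Real.rpow_le_rpow_of_exponent_le hm (le_of_lt hγ')
            rw [Real.rpow_one] at hme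
            exact mul_le_mul_of_nonneg_right hme (Real.rpow_nonneg hTpos.le _)
    have hTγ : (0:ℝ) < T ^ γ := Real.rpow_pos_of_pos hTpos _
    have ht₀γ : (0:ℝ) < t₀ ^ γ := Real.rpow_pos_of_pos ht₀0 _
    have key : T ^ (-γ) ≤ m * t₀ ^ (-γ) := by
      rw [Real.rpow_neg hTpos.le, Real.rpow_neg ht₀0.le, inv_eq_one_div,
        inv_eq_one_div, ← mul_div_assoc, mul_one, div_le_div_iff₀ hTγ ht₀γ]
      nlinarith
    calc T ^ (-γ) ≤ m * t₀ ^ (-γ) := key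
      _ ≤ Cv * t₀ ^ (-γ) :=
          mul_le_mul_of_nonneg_right hCvm (Real.rpow_nonneg ht₀0.le _)
  · -- main estimate
    intro t ht x hx r hr
    obtain ⟨hr0, hr1⟩ := hr
    have ht1 : (1:ℝ) ≤ t := le_trans ht₀ ht
    have ht0 : (0:ℝ) < t := lt_of_lt_of_le one_pos ht1
    set c : ℝ := Real.exp r with hc
    have hc1 : (1:ℝ) ≤ c := Real.one_le_exp hr0
    have hce : c ≤ Real.exp 1 := Real.exp_le_exp.2 hr1
    have hc0 : (0:ℝ) < c := lt_of_lt_of_le one_pos hc1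
    set U : ℝ := u (φ r x) t with hU
    have hut : t = ∫ s in (0:ℝ)..U, τ (h s (φ r x)) := hu (φ r x) t
    -- measurability / integrability helpers
    have hmτ : Measurable fun s : ℝ => τ (h s (φ r x)) :=
      hτm.comp (hunch.comp (measurable_id.prodMk measurable_const))
    have hiiτ : ∀ a b : ℝ, IntervalIntegrable (fun s => τ (h s (φ r x))) volume a b := by
      intro a b
      refine bdd_ii _ hmτ m (fun s => ?_) a b
      have h1 := hτlo (h s (φ r x)); have h2 := hτhi (h s (φ r x))
      have h3 : (0:ℝ) < m⁻¹ := inv_pos.2 hm0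
      rw [abs_le]; constructor <;> linarith
    -- U > 0
    have hUpos : 0 < U := by
      by_contra hn
      push_neg at hn
      have h1 : (0:ℝ) ≤ ∫ s in U..(0:ℝ), τ (h s (φ r x)) := by
        refine intervalIntegral.integral_nonneg hn (fun s _ => ?_)
        have h3 : (0:ℝ) < m⁻¹ := inv_pos.2 hm0
        linarith [hτlo (h s (φ r x))]
      rw [intervalIntegral.integral_symm] at hut
      linarith
    -- U ≤ m * t
    have hUle : U ≤ m * t := by
      have h1 : ∫ s in (0:ℝ)..U, (m⁻¹ : ℝ) ≤ ∫ s in (0:ℝ)..U, τ (h s (φ r x)) :=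
        intervalIntegral.integral_mono_on hUpos.le intervalIntegrable_const
          (hiiτ 0 U) (fun s _ => hτlo _)
      rw [intervalIntegral.integral_const] at h1
      simp only [smul_eq_mul, sub_zero] at h1
      rw [← hut] at h1
      have h2 : U ≤ m * t := by
        have h3 : U * m⁻¹ * m ≤ t * m := mul_le_mul_of_nonneg_right h1 hm0.le
        rw [mul_assoc, inv_mul_cancel₀ hm0.ne', mul_one] at h3
        linarith [mul_comm t m]
      exact h2
    -- t ≤ m * U
    have hUge : t ≤ m * U := by
      have h1 : ∫ s in (0:ℝ)..U, τ (h s (φ r x)) ≤ ∫ s in (0:ℝ)..U, (m : ℝ) :=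
        intervalIntegral.integral_mono_on hUpos.le (hiiτ 0 U)
          intervalIntegrable_const (fun s _ => hτhi _)
      rw [intervalIntegral.integral_const] at h1
      simp only [smul_eq_mul, sub_zero] at h1
      rw [← hut] at h1
      linarith [mul_comm U m]
    -- rewrite integrand via commutation
    have hrew : (∫ s in (0:ℝ)..U, ψ (h s (φ r x)))
        = ∫ s in (0:ℝ)..U, ψ (φ r (h (c * s) x)) := by
      simp only [hcomm, hc]
    -- integrands
    have hmB : Measurable fun s : ℝ => ψ (h (c * s) x) :=
      hψm.comp (hunch.comp ((measurable_const.mul measurable_id).prodMk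
        measurable_const))
    have hmA : Measurable fun s : ℝ => ψ (φ r (h (c * s) x)) :=
      hψm.comp ((hmφ r).comp (hunch.comp
        ((measurable_const.mul measurable_id).prodMk measurable_const)))
    have hiiA : IntervalIntegrable (fun s => ψ (φ r (h (c * s) x))) volume 0 U :=
      bdd_ii _ hmA m (fun s => hψbd _) 0 U
    have hiiB : IntervalIntegrable (fun s => ψ (h (c * s) x)) volume 0 U :=
      bdd_ii _ hmB m (fun s => hψbd _) 0 U
    -- difference bound
    have hdiff : |∫ s in (0:ℝ)..U, (ψ (φ r (h (c * s) x)) - ψ (h (c * s) x))|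
        ≤ m * r * U := by
      have hb := intervalIntegral.norm_integral_le_of_norm_le_const
        (C := m * r) (f := fun s => ψ (φ r (h (c * s) x)) - ψ (h (c * s) x))
        (a := 0) (b := U) (fun s _ => by
          simpa [Real.norm_eq_abs] using hψlip (h (c * s) x) r ⟨hr0, hr1⟩)
      rw [Real.norm_eq_abs] at hb
      calc |∫ s in (0:ℝ)..U, (ψ (φ r (h (c * s) x)) - ψ (h (c * s) x))|
          ≤ m * r * |U - 0| := hb
        _ = m * r * U := by rw [sub_zero, abs_of_pos hUpos]
    -- change of variables
    set L : ℝ := c * U with hL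
    have hLU : U ≤ L := le_mul_of_one_le_left hUpos.le hc1
    have hLpos : 0 < L := lt_of_lt_of_le hUpos hLU
    have hcov : (∫ s in (0:ℝ)..U, ψ (h (c * s) x))
        = c⁻¹ * ∫ σ in (0:ℝ)..L, ψ (h σ x) := by
      rw [intervalIntegral.integral_comp_mul_left (fun σ => ψ (h σ x)) hc0.ne']
      simp [hL, smul_eq_mul]
    have htpow1 : (1:ℝ) ≤ t ^ (1 - γ) := by
      have h1 := Real.rpow_le_rpow_of_exponent_le ht1 (by linarith : (0:ℝ) ≤ 1 - γ)
      rwa [Real.rpow_zero] at h1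
    have htpow0 : (0:ℝ) ≤ t ^ (1 - γ) := by linarith
    -- bound on J := ∫₀^L ψ(h σ x)
    have hJ : |∫ σ in (0:ℝ)..L, ψ (h σ x)| ≤ (D * Real.exp 1 * m + m) * t ^ (1 - γ) := by
      rcases le_or_gt T L with hTL | hTL
      · have hb := hEbd L hTL x hx
        have hLle : L ≤ Real.exp 1 * m * t := by
          have h1 : c * U ≤ Real.exp 1 * (m * t) :=
            mul_le_mul hce hUle hUpos.le (Real.exp_pos 1).le
          rw [hL]; linarith [h1, mul_assoc (Real.exp 1) m t]
        have hem1 : (1:ℝ) ≤ Real.exp 1 * m := by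
          have := mul_le_mul he1 hm zero_le_one (Real.exp_pos 1).le
          linarith
        have h2 : L ^ (1 - γ) ≤ (Real.exp 1 * m) * t ^ (1 - γ) := by
          calc L ^ (1 - γ) ≤ (Real.exp 1 * m * t) ^ (1 - γ) :=
                Real.rpow_le_rpow hLpos.le hLle (by linarith)
            _ = (Real.exp 1 * m) ^ (1 - γ) * t ^ (1 - γ) :=
                Real.mul_rpow (by positivity) ht0.le
            _ ≤ (Real.exp 1 * m) * t ^ (1 - γ) := by
                have h3 := Real.rpow_le_rpow_of_exponent_le hem1
                  (by linarith : (1:ℝ) - γ ≤ 1)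
                rw [Real.rpow_one] at h3
                exact mul_le_mul_of_nonneg_right h3 htpow0
        calc |∫ σ in (0:ℝ)..L, ψ (h σ x)| ≤ D * L ^ (1 - γ) := hb
          _ ≤ D * ((Real.exp 1 * m) * t ^ (1 - γ)) :=
              mul_le_mul_of_nonneg_left h2 hD
          _ = D * Real.exp 1 * m * t ^ (1 - γ) := by ring
          _ ≤ (D * Real.exp 1 * m + m) * t ^ (1 - γ) :=
              mul_le_mul_of_nonneg_right (by linarith) htpow0
      · -- L < T forces L < 1
        have hTL' : L < max 1 (t₀ / m) := by rw [← hT]; exact hTL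
        have hL1 : L < 1 := by
          rcases lt_max_iff.1 hTL' with h1 | h1
          · exact h1
          · exfalso
            have h2 : t₀ / m ≤ U := by
              rw [div_le_iff₀ hm0]
              have : t₀ ≤ m * U := le_trans ht hUge
              linarith [mul_comm U m]
            linarith
        have hb := intervalIntegral.norm_integral_le_of_norm_le_const
          (C := m) (f := fun σ => ψ (h σ x)) (a := 0) (b := L)
          (fun s _ => by simpa [Real.norm_eq_abs] using hψbd (h s x))
        rw [Real.norm_eq_abs, sub_zero, abs_of_pos hLpos] at hb
        calc |∫ σ in (0:ℝ)..L, ψ (h σ x)| ≤ m * L := hb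
          _ ≤ m * 1 := mul_le_mul_of_nonneg_left hL1.le hm0.le
          _ ≤ m * t ^ (1 - γ) := mul_le_mul_of_nonneg_left htpow1 hm0.le
          _ ≤ (D * Real.exp 1 * m + m) * t ^ (1 - γ) :=
              mul_le_mul_of_nonneg_right (by linarith) htpow0
    -- assemble
    have hsplit : (∫ s in (0:ℝ)..U, ψ (φ r (h (c * s) x)))
        = (∫ s in (0:ℝ)..U, (ψ (φ r (h (c * s) x)) - ψ (h (c * s) x)))
          + ∫ s in (0:ℝ)..U, ψ (h (c * s) x) := by
      rw [intervalIntegral.integral_sub hiiA hiiB]; ring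
    have hB : |∫ s in (0:ℝ)..U, ψ (h (c * s) x)|
        ≤ (D * Real.exp 1 * m + m) * t ^ (1 - γ) := by
      rw [hcov, abs_mul, abs_of_pos (inv_pos.2 hc0)]
      calc c⁻¹ * |∫ σ in (0:ℝ)..L, ψ (h σ x)|
          ≤ 1 * |∫ σ in (0:ℝ)..L, ψ (h σ x)| := by
            refine mul_le_mul_of_nonneg_right ?_ (abs_nonneg _)
            rw [inv_le_one_iff₀]; right; exact hc1
        _ = |∫ σ in (0:ℝ)..L, ψ (h σ x)| := one_mul _
        _ ≤ (D * Real.exp 1 * m + m) * t ^ (1 - γ) := hJ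
    have main : |∫ s in (0:ℝ)..U, ψ (h s (φ r x))| ≤ Cv * (r * t + t ^ (1 - γ)) := by
      rw [hrew, hsplit]
      have h1 : m * r * U ≤ m ^ 2 * (r * t) := by
        have h2 : r * U ≤ r * (m * t) := mul_le_mul_of_nonneg_left hUle hr0
        nlinarith
      have h2 : (D * Real.exp 1 * m + m) * t ^ (1 - γ) ≤ Cv * t ^ (1 - γ) := by
        refine mul_le_mul_of_nonneg_right ?_ htpow0
        rw [hCv]; nlinarith
      have h3 : m ^ 2 * (r * t) ≤ Cv * (r * t) := by
        refine mul_le_mul_of_nonneg_right ?_ (mul_nonneg hr0 ht0.le)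
        rw [hCv]; linarith
      calc |(∫ s in (0:ℝ)..U, (ψ (φ r (h (c * s) x)) - ψ (h (c * s) x)))
            + ∫ s in (0:ℝ)..U, ψ (h (c * s) x)|
          ≤ |∫ s in (0:ℝ)..U, (ψ (φ r (h (c * s) x)) - ψ (h (c * s) x))|
            + |∫ s in (0:ℝ)..U, ψ (h (c * s) x)| := abs_add_le _ _
        _ ≤ m * r * U + (D * Real.exp 1 * m + m) * t ^ (1 - γ) := add_le_add hdiff hB
        _ ≤ Cv * (r * t + t ^ (1 - γ)) := by rw [mul_add]; linarith
    have hfin : (t - ∫ s in (0:ℝ)..(u (φ r x) t), ψ (h s (φ r x))) - t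
        = -(∫ s in (0:ℝ)..U, ψ (h s (φ r x))) := by rw [← hU]; ring
    rw [hfin, abs_neg]
    exact main
end

section
/- Let (φ_s)_{s∈ℝ} be a measurable measure-preserving flow on a probability space (M, μ). Let F ∈ L²(M, μ) ∩ L^∞(M, μ) be real-valued, and let G, DG ∈ L²(M, μ) be real-valued functions such that for every s ∈ ℝ and μ-almost every x ∈ M: G(φ_s(x)) = G(x) + ∫₀^s DG(φ_r(x)) dr. For s ≥ 0 define A_s F(x) = ∫₀^s F(φ_r(x)) dr. Then for every σ > 0: |∫_M F · G dμ| ≤ ( ‖G‖₂ + σ ‖DG‖₂ ) · (1/σ) · sup_{s ∈ [0,σ]} ‖A_s F‖₂. -/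
open MeasureTheory intervalIntegral
open scoped ENNReal NNReal

private lemma cs_aux {M : Type*} [MeasurableSpace M] {μ : Measure M}
    {f g : M → ℝ} (hf : MemLp f 2 μ) (hg : MemLp g 2 μ) :
    |∫ x, f x * g x ∂μ| ≤ (eLpNorm f 2 μ).toReal * (eLpNorm g 2 μ).toReal := by
  have h1 : ∫ x, f x * g x ∂μ = inner (𝕜 := ℝ) (hf.toLp f) (hg.toLp g) := by
    rw [MeasureTheory.L2.inner_def]
    refine (MeasureTheory.integral_congr_ae ?_).symm
    filter_upwards [hf.coeFn_toLp, hg.coeFn_toLp] with x h1 h2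
    simp [h1, h2, RCLike.inner_apply, mul_comm]
  rw [h1, ← Lp.norm_toLp f hf, ← Lp.norm_toLp g hg]
  exact abs_real_inner_le_norm _ _

private lemma map_flow {M : Type*} [MeasurableSpace M] {μ : Measure M} [IsProbabilityMeasure μ]
    {φ : ℝ → M → M} (h_joint : Measurable (Function.uncurry φ))
    (h_mp : ∀ s : ℝ, MeasurePreserving (φ s) μ μ) (s : ℝ) :
    ((volume.restrict (Set.Ioc (0:ℝ) s)).prod μ).map (Function.uncurry φ)
      = (volume (Set.Ioc (0:ℝ) s)) • μ := by
  ext A hA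
  rw [Measure.map_apply h_joint hA, Measure.prod_apply (h_joint hA)]
  have h : ∀ r : ℝ, μ (Prod.mk r ⁻¹' (Function.uncurry φ ⁻¹' A)) = μ A := fun r =>
    (h_mp r).measure_preimage hA.nullMeasurableSet
  simp only [h, lintegral_const, Measure.smul_apply, smul_eq_mul]
  rw [Measure.restrict_apply_univ, mul_comm]

private lemma map_flow' {M : Type*} [MeasurableSpace M] {μ : Measure M} [IsProbabilityMeasure μ]
    {φ : ℝ → M → M} (h_joint : Measurable (Function.uncurry φ))
    (h_mp : ∀ s : ℝ, MeasurePreserving (φ s) μ μ) (s : ℝ) :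
    (μ.prod (volume.restrict (Set.Ioc (0:ℝ) s))).map (fun p : M × ℝ => φ p.2 p.1)
      = (volume (Set.Ioc (0:ℝ) s)) • μ := by
  have hm' : Measurable (fun p : M × ℝ => φ p.2 p.1) := h_joint.comp measurable_swap
  rw [← Measure.prod_swap, Measure.map_map hm' measurable_swap]
  exact map_flow h_joint h_mp s

/-- (Abstract Lemma 5.1, mixing via shearing.) For a measure-preserving
flow `(φ_s)` on a probability space, `F ∈ L² ∩ L^∞`, and `G, DG ∈ L²` with
`G ∘ φ_s = G + ∫₀^s DG ∘ φ_r dr` a.e., one has, for every `σ > 0`,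
`|∫ F G dμ| ≤ (‖G‖₂ + σ ‖DG‖₂) σ⁻¹ sup_{s ∈ [0,σ]} ‖A_s F‖₂`, where
`A_s F(x) = ∫₀^s F(φ_r x) dr`. -/
theorem mixing_via_shearing
    {M : Type*} [MeasurableSpace M] (μ : Measure M) [IsProbabilityMeasure μ]
    (φ : ℝ → M → M)
    (hmeas : ∀ s : ℝ, Measurable (φ s))
    (h_zero : φ 0 = id)
    (h_add : ∀ s r : ℝ, φ (s + r) = φ s ∘ φ r)
    (h_joint : Measurable (Function.uncurry φ))
    (h_mp : ∀ s : ℝ, MeasurePreserving (φ s) μ μ)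
    (F G DG : M → ℝ)
    (hF2 : MemLp F 2 μ) (hFinf : MemLp F ⊤ μ)
    (hG : MemLp G 2 μ) (hDG : MemLp DG 2 μ)
    (hGcoc : ∀ s : ℝ, ∀ᵐ x ∂μ, G (φ s x) = G x + ∫ r in (0:ℝ)..s, DG (φ r x)) :
    ∀ σ : ℝ, 0 < σ →
      ENNReal.ofReal |∫ x, F x * G x ∂μ| ≤
        (eLpNorm G 2 μ + ENNReal.ofReal σ * eLpNorm DG 2 μ) * (ENNReal.ofReal σ)⁻¹ *
          ⨆ s ∈ Set.Icc (0:ℝ) σ,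
            eLpNorm (fun x => ∫ r in (0:ℝ)..s, F (φ r x)) 2 μ := by
  intro σ hσ
  -- the essential bound for F
  set C : ℝ := (eLpNorm F ⊤ μ).toReal with hCdef
  have hC0 : 0 ≤ C := ENNReal.toReal_nonneg
  have hFb : ∀ᵐ x ∂μ, ‖F x‖ ≤ C := by
    filter_upwards [ae_le_eLpNormEssSup (f := F) (μ := μ)] with x hx
    have : ((‖F x‖₊ : ℝ≥0∞)).toReal ≤ C := by
      rw [hCdef, eLpNorm_exponent_top]
      exact ENNReal.toReal_mono (by simpa [eLpNorm_exponent_top] using hFinf.2.ne) hx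
    simpa using this
  -- measurable representatives
  set Fm : M → ℝ := hF2.1.mk F with hFmdef
  have hFm_meas : Measurable Fm := hF2.1.stronglyMeasurable_mk.measurable
  set F₀ : M → ℝ := fun x => max (-C) (min (Fm x) C) with hF₀def
  have hF₀_meas : Measurable F₀ := measurable_const.max (hFm_meas.min measurable_const)
  have hF₀_bdd : ∀ x, ‖F₀ x‖ ≤ C := by
    intro x
    rw [Real.norm_eq_abs]
    exact abs_le.2 ⟨le_max_left _ _, max_le (by linarith) (min_le_right _ _)⟩
  have hFF₀ : F =ᵐ[μ] F₀ := by
    filter_upwards [hF2.1.ae_eq_mk, hFb] with x h1 h2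
    rw [Real.norm_eq_abs] at h2
    have h2' := abs_le.1 h2
    rw [← hFmdef] at h1
    rw [hF₀def]; dsimp only
    rw [← h1, min_eq_left h2'.2, max_eq_right h2'.1]
  set G₀ : M → ℝ := hG.1.mk G with hG₀def
  have hG₀_meas : Measurable G₀ := hG.1.stronglyMeasurable_mk.measurable
  have hGG₀ : G =ᵐ[μ] G₀ := hG.1.ae_eq_mk
  set DG₀ : M → ℝ := hDG.1.mk DG with hDG₀def
  have hDG₀_meas : Measurable DG₀ := hDG.1.stronglyMeasurable_mk.measurable
  have hDGDG₀ : DG =ᵐ[μ] DG₀ := hDG.1.ae_eq_mk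
  have hG₀2 : MemLp G₀ 2 μ := hG.ae_eq hGG₀
  have hDG₀2 : MemLp DG₀ 2 μ := hDG.ae_eq hDGDG₀
  have hG₀int : Integrable G₀ μ := hG₀2.integrable one_le_two
  have hDG₀int : Integrable DG₀ μ := hDG₀2.integrable one_le_two
  -- product measure helpers
  have hvol_ne_top : ∀ s : ℝ, volume (Set.Ioc (0:ℝ) s) ≠ ⊤ := by
    intro s; rw [Real.volume_Ioc]; exact ENNReal.ofReal_ne_top
  have hcompInt : ∀ (s : ℝ) (f : M → ℝ), Measurable f → Integrable f μ →
      Integrable (fun p : ℝ × M => f (φ p.1 p.2))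
        ((volume.restrict (Set.Ioc (0:ℝ) s)).prod μ) := by
    intro s f hfm hfi
    have h1 : Integrable f (((volume.restrict (Set.Ioc (0:ℝ) s)).prod μ).map
        (Function.uncurry φ)) := by
      rw [map_flow h_joint h_mp s]
      exact hfi.smul_measure (hvol_ne_top s)
    exact h1.comp_measurable h_joint
  have hsndInt : ∀ (s : ℝ) (f : M → ℝ), Measurable f → Integrable f μ →
      Integrable (fun p : ℝ × M => f p.2)
        ((volume.restrict (Set.Ioc (0:ℝ) s)).prod μ) := by
    intro s f hfm hfi
    have h1 : Integrable f (((volume.restrict (Set.Ioc (0:ℝ) s)).prod μ).map Prod.snd) := by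
      rw [Measure.map_snd_prod]
      exact hfi.smul_measure (by rw [Measure.restrict_apply_univ]; exact hvol_ne_top s)
    exact h1.comp_measurable measurable_snd
  have hae_flow : ∀ (s : ℝ) (f g : M → ℝ), f =ᵐ[μ] g →
      ∀ᵐ x ∂μ, ∀ᵐ r ∂(volume.restrict (Set.Ioc (0:ℝ) s)), f (φ r x) = g (φ r x) := by
    intro s f g hfg
    have hm' : Measurable (fun p : M × ℝ => φ p.2 p.1) := h_joint.comp measurable_swap
    have h1 : (fun p : M × ℝ => f (φ p.2 p.1))
        =ᵐ[μ.prod (volume.restrict (Set.Ioc (0:ℝ) s))] (fun p => g (φ p.2 p.1)) := by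
      refine ae_eq_comp hm'.aemeasurable ?_
      rw [map_flow' h_joint h_mp s]
      exact Measure.smul_absolutelyContinuous.ae_eq hfg
    exact Measure.ae_ae_of_ae_prod h1
  -- the averaged function A
  set A : ℝ → M → ℝ := fun s x => ∫ r in (0:ℝ)..s, F₀ (φ r x) with hAdef
  have hA_bdd : ∀ s x, 0 ≤ s → ‖A s x‖ ≤ C * s := by
    intro s x hs
    have := intervalIntegral.norm_integral_le_of_norm_le_const
      (C := C) (f := fun r => F₀ (φ r x)) (a := 0) (b := s) (fun r _ => hF₀_bdd _)
    simpa [abs_of_nonneg hs] using this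
  have hA_eq : ∀ s : ℝ, 0 ≤ s → ∀ x,
      A s x = ∫ r, F₀ (φ r x) ∂(volume.restrict (Set.Ioc (0:ℝ) s)) := by
    intro s hs x; exact intervalIntegral.integral_of_le hs
  have hA_meas : ∀ s : ℝ, 0 ≤ s → Measurable (A s) := by
    intro s hs
    have h1 : A s = fun x => ∫ r, F₀ (φ r x) ∂(volume.restrict (Set.Ioc (0:ℝ) s)) :=
      funext (hA_eq s hs)
    rw [h1]
    exact ((hF₀_meas.comp h_joint).stronglyMeasurable.integral_prod_left').measurable
  have hA_mem : ∀ s : ℝ, s ∈ Set.Icc (0:ℝ) σ → MemLp (A s) 2 μ := by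
    intro s hs
    refine MemLp.of_bound (hA_meas s hs.1).aestronglyMeasurable (C * σ) ?_
    exact Filter.Eventually.of_forall fun x =>
      (hA_bdd s x hs.1).trans (by nlinarith [hs.2, hC0])
  have hA_cong : ∀ s : ℝ, s ∈ Set.Icc (0:ℝ) σ →
      eLpNorm (fun x => ∫ r in (0:ℝ)..s, F (φ r x)) 2 μ = eLpNorm (A s) 2 μ := by
    intro s hs
    refine eLpNorm_congr_ae ?_
    filter_upwards [hae_flow s F F₀ hFF₀] with x hx
    rw [hAdef]; dsimp only
    rw [intervalIntegral.integral_of_le hs.1, intervalIntegral.integral_of_le hs.1]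
    exact MeasureTheory.integral_congr_ae hx
  set S : ℝ≥0∞ := ⨆ s ∈ Set.Icc (0:ℝ) σ,
      eLpNorm (fun x => ∫ r in (0:ℝ)..s, F (φ r x)) 2 μ with hSdef
  have hS_le : S ≤ ENNReal.ofReal (C * σ) := by
    refine iSup₂_le fun s hs => ?_
    rw [hA_cong s hs]
    have h1 := eLpNorm_le_of_ae_bound (μ := μ) (p := 2) (C := C * σ)
      (Filter.Eventually.of_forall fun x => (hA_bdd s x hs.1).trans (by nlinarith [hs.2, hC0]) )
    simpa using h1
  have hS_ne : S ≠ ⊤ := (hS_le.trans_lt ENNReal.ofReal_lt_top).ne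
  set Sr : ℝ := S.toReal with hSrdef
  have hSr0 : 0 ≤ Sr := ENNReal.toReal_nonneg
  have hA_le_S : ∀ s : ℝ, s ∈ Set.Icc (0:ℝ) σ → (eLpNorm (A s) 2 μ).toReal ≤ Sr := by
    intro s hs
    refine ENNReal.toReal_mono hS_ne ?_
    rw [← hA_cong s hs, hSdef]
    exact le_biSup (fun s => eLpNorm (fun x => ∫ r in (0:ℝ)..s, F (φ r x)) 2 μ) hs
  set nG : ℝ := (eLpNorm G₀ 2 μ).toReal with hnGdef
  set nDG : ℝ := (eLpNorm DG₀ 2 μ).toReal with hnDGdef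
  have hnG0 : 0 ≤ nG := ENNReal.toReal_nonneg
  have hnDG0 : 0 ≤ nDG := ENNReal.toReal_nonneg
  -- cocycle with representatives
  have hGcoc₀ : ∀ s : ℝ, 0 ≤ s → ∀ᵐ x ∂μ,
      G₀ (φ s x) = G₀ x + ∫ r in (0:ℝ)..s, DG₀ (φ r x) := by
    intro s hs
    have h1 : (fun x => G₀ (φ s x)) =ᵐ[μ] fun x => G (φ s x) :=
      (h_mp s).quasiMeasurePreserving.ae_eq_comp hGG₀.symm
    filter_upwards [hGcoc s, h1, hGG₀, hae_flow s DG DG₀ hDGDG₀] with x hx hgs hgx hdg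
    rw [hgs, hx, hgx]
    congr 1
    rw [intervalIntegral.integral_of_le hs, intervalIntegral.integral_of_le hs]
    exact MeasureTheory.integral_congr_ae hdg
  -- the basic splitting identity for fixed time s
  set T1 : ℝ → ℝ := fun s => ∫ x, F₀ (φ s x) * G₀ x ∂μ with hT1def
  have hbddF₀ : ∃ c : ℝ, ∀ x : M, ‖F₀ x‖ ≤ c := ⟨C, hF₀_bdd⟩
  have key : ∀ s : ℝ, s ∈ Set.Ioc (0:ℝ) σ →
      (∫ x, F₀ x * G₀ x ∂μ) = T1 s + ∫ x, A s x * DG₀ x ∂μ := by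
    intro s hs
    have hs0 : (0:ℝ) ≤ s := hs.1.le
    -- invariance
    have hsm : AEStronglyMeasurable (fun y => F₀ y * G₀ y) (μ.map (φ s)) := by
      rw [(h_mp s).map_eq]
      exact (hF₀_meas.mul hG₀_meas).aestronglyMeasurable
    have step1 : ∫ x, F₀ x * G₀ x ∂μ = ∫ x, F₀ (φ s x) * G₀ (φ s x) ∂μ := by
      have h1 := MeasureTheory.integral_map (φ := φ s) (hmeas s).aemeasurable hsm
      rw [(h_mp s).map_eq] at h1
      exact h1
    have hint1 : Integrable (fun x => F₀ (φ s x) * G₀ x) μ :=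
      hG₀int.bdd_mul ((hF₀_meas.comp (hmeas s)).aestronglyMeasurable)
        (Filter.Eventually.of_forall fun x => hF₀_bdd _)
    have hint2 : Integrable (fun x => F₀ (φ s x) * G₀ (φ s x)) μ := by
      have h2 : Integrable (fun y => F₀ y * G₀ y) (μ.map (φ s)) := by
        rw [(h_mp s).map_eq]
        exact hG₀int.bdd_mul hF₀_meas.aestronglyMeasurable (Filter.Eventually.of_forall hF₀_bdd)
      exact h2.comp_measurable (hmeas s)
    have hG₀comp : Integrable (fun x => G₀ (φ s x)) μ := by
      have h2i : Integrable G₀ (μ.map (φ s)) := by rw [(h_mp s).map_eq]; exact hG₀int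
      exact h2i.comp_measurable (hmeas s)
    have hsub : Integrable (fun x => G₀ (φ s x) - G₀ x) μ := hG₀comp.sub hG₀int
    have h' : Integrable (fun x => F₀ (φ s x) * (G₀ (φ s x) - G₀ x)) μ :=
      hsub.bdd_mul ((hF₀_meas.comp (hmeas s)).aestronglyMeasurable) (Filter.Eventually.of_forall fun x => hF₀_bdd _)
    have step2 : ∫ x, F₀ (φ s x) * G₀ (φ s x) ∂μ
        = T1 s + ∫ x, F₀ (φ s x) * (G₀ (φ s x) - G₀ x) ∂μ := by
      rw [hT1def]; dsimp only
      rw [← MeasureTheory.integral_add hint1 h']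
      refine MeasureTheory.integral_congr_ae (Filter.Eventually.of_forall fun x => ?_)
      ring
    have step3 : ∫ x, F₀ (φ s x) * (G₀ (φ s x) - G₀ x) ∂μ
        = ∫ x, F₀ (φ s x) * (∫ r in (0:ℝ)..s, DG₀ (φ r x)) ∂μ := by
      refine MeasureTheory.integral_congr_ae ?_
      filter_upwards [hGcoc₀ s hs0] with x hx
      rw [hx]; ring
    -- Fubini part
    have step4 : ∫ x, F₀ (φ s x) * (∫ r in (0:ℝ)..s, DG₀ (φ r x)) ∂μ
        = ∫ x, A s x * DG₀ x ∂μ := by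
      have hswap1 : Integrable (fun p : ℝ × M => F₀ (φ s p.2) * DG₀ (φ p.1 p.2))
          ((volume.restrict (Set.Ioc (0:ℝ) s)).prod μ) :=
        (hcompInt s DG₀ hDG₀_meas hDG₀int).bdd_mul
          ((hF₀_meas.comp ((hmeas s).comp measurable_snd)).aestronglyMeasurable)
          (Filter.Eventually.of_forall fun p => hF₀_bdd _)
      have h1 : ∫ x, F₀ (φ s x) * (∫ r in (0:ℝ)..s, DG₀ (φ r x)) ∂μ
          = ∫ x, ∫ r, F₀ (φ s x) * DG₀ (φ r x) ∂(volume.restrict (Set.Ioc (0:ℝ) s)) ∂μ := by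
        refine MeasureTheory.integral_congr_ae (Filter.Eventually.of_forall fun x => ?_)
        show F₀ (φ s x) * (∫ r in (0:ℝ)..s, DG₀ (φ r x))
          = ∫ r, F₀ (φ s x) * DG₀ (φ r x) ∂(volume.restrict (Set.Ioc (0:ℝ) s))
        rw [intervalIntegral.integral_of_le hs0, ← MeasureTheory.integral_const_mul]
      have h2 : ∫ x, ∫ r, F₀ (φ s x) * DG₀ (φ r x) ∂(volume.restrict (Set.Ioc (0:ℝ) s)) ∂μ
          = ∫ r in Set.Ioc (0:ℝ) s, (∫ x, F₀ (φ s x) * DG₀ (φ r x) ∂μ) := by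
        exact (MeasureTheory.integral_integral_swap
          (f := fun r x => F₀ (φ s x) * DG₀ (φ r x)) hswap1).symm
      have h3 : ∀ r : ℝ, (∫ x, F₀ (φ s x) * DG₀ (φ r x) ∂μ)
          = ∫ y, F₀ (φ (s - r) y) * DG₀ y ∂μ := by
        intro r
        have hc : ∀ x, φ s x = φ (s - r) (φ r x) := by
          intro x
          have := congrFun (h_add (s - r) r) x
          simpa [sub_add_cancel] using this
        have hsm2 : AEStronglyMeasurable (fun y => F₀ (φ (s - r) y) * DG₀ y) (μ.map (φ r)) := by
          rw [(h_mp r).map_eq]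
          exact ((hF₀_meas.comp (hmeas (s - r))).mul hDG₀_meas).aestronglyMeasurable
        have h4 := MeasureTheory.integral_map (φ := φ r) (hmeas r).aemeasurable hsm2
        rw [(h_mp r).map_eq] at h4
        rw [h4]
        refine MeasureTheory.integral_congr_ae (Filter.Eventually.of_forall fun x => ?_)
        show F₀ (φ s x) * DG₀ (φ r x) = F₀ (φ (s - r) (φ r x)) * DG₀ (φ r x)
        rw [hc x]
      have h5 : ∫ r in Set.Ioc (0:ℝ) s, (∫ x, F₀ (φ s x) * DG₀ (φ r x) ∂μ)
          = ∫ u in Set.Ioc (0:ℝ) s, (∫ y, F₀ (φ u y) * DG₀ y ∂μ) := by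
        rw [← intervalIntegral.integral_of_le hs0, ← intervalIntegral.integral_of_le hs0]
        have h6 : ∀ r : ℝ, (∫ x, F₀ (φ s x) * DG₀ (φ r x) ∂μ)
            = (fun u => ∫ y, F₀ (φ u y) * DG₀ y ∂μ) (s - r) := fun r => h3 r
        rw [intervalIntegral.integral_congr (g := fun r =>
          (fun u => ∫ y, F₀ (φ u y) * DG₀ y ∂μ) (s - r)) (fun r _ => h6 r)]
        rw [intervalIntegral.integral_comp_sub_left (fun u => ∫ y, F₀ (φ u y) * DG₀ y ∂μ) s]
        norm_num
      have hswap2 : Integrable (fun p : ℝ × M => F₀ (φ p.1 p.2) * DG₀ p.2)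
          ((volume.restrict (Set.Ioc (0:ℝ) s)).prod μ) :=
        (hsndInt s DG₀ hDG₀_meas hDG₀int).bdd_mul
          ((hF₀_meas.comp h_joint).aestronglyMeasurable)
          (Filter.Eventually.of_forall fun p => hF₀_bdd _)
      have h7 : ∫ u in Set.Ioc (0:ℝ) s, (∫ y, F₀ (φ u y) * DG₀ y ∂μ)
          = ∫ y, ∫ u, F₀ (φ u y) * DG₀ y ∂(volume.restrict (Set.Ioc (0:ℝ) s)) ∂μ :=
        MeasureTheory.integral_integral_swap
          (f := fun u y => F₀ (φ u y) * DG₀ y) hswap2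
      have h8 : ∫ y, ∫ u, F₀ (φ u y) * DG₀ y ∂(volume.restrict (Set.Ioc (0:ℝ) s)) ∂μ
          = ∫ y, A s y * DG₀ y ∂μ := by
        refine MeasureTheory.integral_congr_ae (Filter.Eventually.of_forall fun y => ?_)
        show (∫ u, F₀ (φ u y) * DG₀ y ∂(volume.restrict (Set.Ioc (0:ℝ) s))) = A s y * DG₀ y
        rw [MeasureTheory.integral_mul_const, hA_eq s hs0 y]
      rw [h1, h2, h5, h7, h8]
    rw [step1, step2, step3, step4]
  -- integrate the identity over s ∈ (0, σ]
  have hH1 : Integrable (fun p : ℝ × M => F₀ (φ p.1 p.2) * G₀ p.2)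
      ((volume.restrict (Set.Ioc (0:ℝ) σ)).prod μ) :=
    (hsndInt σ G₀ hG₀_meas hG₀int).bdd_mul
      ((hF₀_meas.comp h_joint).aestronglyMeasurable) (Filter.Eventually.of_forall fun p => hF₀_bdd _)
  have hT1int : Integrable T1 (volume.restrict (Set.Ioc (0:ℝ) σ)) := by
    have := hH1.integral_prod_left
    exact this
  have hT1swap : ∫ s in Set.Ioc (0:ℝ) σ, T1 s = ∫ x, A σ x * G₀ x ∂μ := by
    have h1 := MeasureTheory.integral_integral_swap
      (f := fun s x => F₀ (φ s x) * G₀ x) hH1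
    rw [hT1def]
    refine h1.trans (MeasureTheory.integral_congr_ae (Filter.Eventually.of_forall fun x => ?_))
    show (∫ s in Set.Ioc (0:ℝ) σ, F₀ (φ s x) * G₀ x) = A σ x * G₀ x
    rw [MeasureTheory.integral_mul_const, hA_eq σ hσ.le x]
  set c : ℝ := ∫ x, F₀ x * G₀ x ∂μ with hcdef
  set t2 : ℝ → ℝ := fun s => c - T1 s with ht2def
  have ht2int : Integrable t2 (volume.restrict (Set.Ioc (0:ℝ) σ)) :=
    (integrable_const c).sub hT1int
  have hmain : σ * c = (∫ x, A σ x * G₀ x ∂μ) + ∫ s in Set.Ioc (0:ℝ) σ, t2 s := by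
    have h1 : ∫ s in Set.Ioc (0:ℝ) σ, (T1 s + t2 s) = σ * c := by
      have h2 : ∀ s, T1 s + t2 s = c := by intro s; rw [ht2def]; ring
      simp only [h2]
      rw [MeasureTheory.setIntegral_const, measureReal_def, Real.volume_Ioc, sub_zero, smul_eq_mul,
        ENNReal.toReal_ofReal hσ.le]
    rw [← h1, MeasureTheory.integral_add hT1int ht2int, hT1swap]
  -- bounds
  have hbound1 : |∫ x, A σ x * G₀ x ∂μ| ≤ Sr * nG := by
    have h1 := cs_aux (hA_mem σ ⟨le_refl 0 |>.trans hσ.le, le_refl σ⟩) hG₀2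
    refine h1.trans ?_
    exact mul_le_mul_of_nonneg_right (hA_le_S σ ⟨hσ.le, le_refl σ⟩) hnG0
  have ht2bound : ∀ s ∈ Set.Ioc (0:ℝ) σ, ‖t2 s‖ ≤ Sr * nDG := by
    intro s hs
    have h1 : t2 s = ∫ x, A s x * DG₀ x ∂μ := by
      rw [ht2def]; dsimp only; rw [hcdef]
      have := key s hs
      linarith [this]
    rw [h1, Real.norm_eq_abs]
    refine (cs_aux (hA_mem s ⟨hs.1.le, hs.2⟩) hDG₀2).trans ?_
    exact mul_le_mul_of_nonneg_right (hA_le_S s ⟨hs.1.le, hs.2⟩) hnDG0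
  have hbound2 : |∫ s in Set.Ioc (0:ℝ) σ, t2 s| ≤ (Sr * nDG) * σ := by
    have h1 := MeasureTheory.norm_setIntegral_le_of_norm_le_const
      (μ := volume) (s := Set.Ioc (0:ℝ) σ) (f := t2)
      (by rw [Real.volume_Ioc]; exact ENNReal.ofReal_lt_top) ht2bound
    rw [measureReal_def, Real.volume_Ioc, sub_zero, ENNReal.toReal_ofReal hσ.le] at h1
    exact h1
  have habs : |c| ≤ (nG + σ * nDG) * σ⁻¹ * Sr := by
    have h1 : σ * |c| = |σ * c| := by rw [abs_mul, abs_of_pos hσ]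
    have h2 : |σ * c| ≤ Sr * nG + Sr * nDG * σ := by
      rw [hmain]
      calc |(∫ x, A σ x * G₀ x ∂μ) + ∫ s in Set.Ioc (0:ℝ) σ, t2 s|
          ≤ |∫ x, A σ x * G₀ x ∂μ| + |∫ s in Set.Ioc (0:ℝ) σ, t2 s| := abs_add_le _ _
        _ ≤ Sr * nG + Sr * nDG * σ := by
            have := hbound1; have := hbound2; linarith
    have h3 : σ * |c| ≤ Sr * nG + Sr * nDG * σ := h1.trans_le h2
    rw [mul_comm, ← le_div_iff₀ hσ] at h3
    refine h3.trans (le_of_eq ?_)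
    field_simp
  -- conversion to ENNReal
  have hFG : ∫ x, F x * G x ∂μ = c := MeasureTheory.integral_congr_ae (hFF₀.mul hGG₀)
  have heG : eLpNorm G 2 μ = ENNReal.ofReal nG := by
    rw [hnGdef, ENNReal.ofReal_toReal hG₀2.2.ne, eLpNorm_congr_ae hGG₀]
  have heDG : eLpNorm DG 2 μ = ENNReal.ofReal nDG := by
    rw [hnDGdef, ENNReal.ofReal_toReal hDG₀2.2.ne, eLpNorm_congr_ae hDGDG₀]
  have heS : S = ENNReal.ofReal Sr := by
    rw [hSrdef, ENNReal.ofReal_toReal hS_ne]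
  rw [hFG, heG, heDG, heS]
  rw [← ENNReal.ofReal_mul hσ.le, ← ENNReal.ofReal_add hnG0 (by positivity),
    ← ENNReal.ofReal_inv_of_pos hσ,
    ← ENNReal.ofReal_mul (by positivity), ← ENNReal.ofReal_mul (by positivity)]
  exact ENNReal.ofReal_le_ofReal habs
end

section
/- Let t > 0, σ > 0, C' ≥ 0 and K ≥ 0. Let v : [0,σ] → ℝ be differentiable with |v(r)| ≥ t/2 and |d/dr(e^{-r}/v(r))| ≤ C'/t for all r ∈ [0,σ], let τ̃ : [0,σ] → ℝ be continuous and positive, let w : [0,σ] → ℝ be differentiable with w'(r) = e^r v(r)/τ̃(r) for all r ∈ [0,σ], and let G : ℝ → ℝ be continuous with |∫_{w(0)}^{w(r)} G(ℓ) dℓ| ≤ K for all r ∈ [0,σ]. Then for every s ∈ [0,σ]: | ∫₀^s G(w(r))/τ̃(r) dr | ≤ (2 + σ C') K / t. -/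
open intervalIntegral

/-- (Key quantitative estimate in the proof of Proposition 5.3.) If on
`[0,σ]` one has `|v| ≥ t/2`, `|d/dr(e^{-r}/v(r))| ≤ C'/t`, `τ` continuous positive, `w`
with `w' = e^r v/τ`, and `G` continuous with `|∫_{w(0)}^{w(r)} G| ≤ K`, then for every
`s ∈ [0,σ]`: `|∫₀^s G(w(r))/τ(r) dr| ≤ (2 + σ C') K / t`. -/
theorem sheared_integral_bound
    (t σ C' K : ℝ) (ht : 0 < t) (hσ : 0 < σ) (hC' : 0 ≤ C') (hK : 0 ≤ K)
    (v τ w : ℝ → ℝ) (G : ℝ → ℝ)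
    (hv : ∀ r ∈ Set.Icc (0:ℝ) σ, DifferentiableAt ℝ v r)
    (hv_lb : ∀ r ∈ Set.Icc (0:ℝ) σ, t / 2 ≤ |v r|)
    (hv' : ∀ r ∈ Set.Icc (0:ℝ) σ,
      |deriv (fun r' => Real.exp (-r') / v r') r| ≤ C' / t)
    (hτ : ContinuousOn τ (Set.Icc (0:ℝ) σ))
    (hτ_pos : ∀ r ∈ Set.Icc (0:ℝ) σ, 0 < τ r)
    (hw : ∀ r ∈ Set.Icc (0:ℝ) σ, HasDerivAt w (Real.exp r * v r / τ r) r)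
    (hG : Continuous G)
    (hGK : ∀ r ∈ Set.Icc (0:ℝ) σ, |∫ ℓ in (w 0)..(w r), G ℓ| ≤ K) :
    ∀ s ∈ Set.Icc (0:ℝ) σ,
      |∫ r in (0:ℝ)..s, G (w r) / τ r| ≤ (2 + σ * C') * K / t := by
  intro s hs
  obtain ⟨hs0, hsσ⟩ := hs
  -- notation
  set p : ℝ → ℝ := fun r => Real.exp (-r) / v r with hp_def
  set p' : ℝ → ℝ := deriv p with hp'_def
  set F : ℝ → ℝ := fun r => ∫ ℓ in (w 0)..(w r), G ℓ with hF_def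
  set F' : ℝ → ℝ := fun r => G (w r) * (Real.exp r * v r / τ r) with hF'_def
  have hvne : ∀ r ∈ Set.Icc (0:ℝ) σ, v r ≠ 0 := by
    intro r hr
    have := hv_lb r hr
    intro h
    rw [h, abs_zero] at this
    linarith
  have hτne : ∀ r ∈ Set.Icc (0:ℝ) σ, τ r ≠ 0 := fun r hr => (hτ_pos r hr).ne'
  have hsub : Set.uIcc (0:ℝ) s ⊆ Set.Icc 0 σ := by
    rw [Set.uIcc_of_le hs0]
    exact Set.Icc_subset_Icc le_rfl hsσ
  -- derivative of p
  have hp : ∀ r ∈ Set.Icc (0:ℝ) σ, HasDerivAt p (p' r) r := by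
    intro r hr
    have : DifferentiableAt ℝ p r := by
      exact ((Real.differentiable_exp.comp (differentiable_neg)).differentiableAt).div
        (hv r hr) (hvne r hr)
    exact this.hasDerivAt
  -- derivative of F
  have hF : ∀ r ∈ Set.Icc (0:ℝ) σ, HasDerivAt F (F' r) r := by
    intro r hr
    have hout : HasDerivAt (fun y => ∫ ℓ in (w 0)..y, G ℓ) (G (w r)) (w r) :=
      intervalIntegral.integral_hasDerivAt_right (hG.intervalIntegrable _ _)
        (hG.stronglyMeasurableAtFilter _ _) hG.continuousAt
    exact hout.comp r (hw r hr)
  -- continuity of w on Icc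
  have hw_cont : ContinuousOn w (Set.Icc (0:ℝ) σ) := fun r hr =>
    (hw r hr).continuousAt.continuousWithinAt
  have hv_cont : ContinuousOn v (Set.Icc (0:ℝ) σ) := fun r hr =>
    (hv r hr).continuousAt.continuousWithinAt
  -- integrability of F'
  have hF'_cont : ContinuousOn F' (Set.Icc (0:ℝ) σ) := by
    apply ContinuousOn.mul (hG.comp_continuousOn hw_cont)
    exact ((Real.continuous_exp.continuousOn.mul hv_cont).div hτ hτne)
  have hF'_int : IntervalIntegrable F' MeasureTheory.volume 0 s :=
    (hF'_cont.mono hsub).intervalIntegrable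
  -- integrability of p'
  have hp'_bdd : ∀ r ∈ Set.Icc (0:ℝ) σ, |p' r| ≤ C' / t := hv'
  have hp'_int : IntervalIntegrable p' MeasureTheory.volume 0 s := by
    rw [intervalIntegrable_iff]
    apply MeasureTheory.Integrable.mono'
      (MeasureTheory.integrableOn_const measure_Ioc_lt_top.ne : MeasureTheory.IntegrableOn (fun _ => C'/t) (Set.uIoc 0 s) _)
    · exact (measurable_deriv p).aestronglyMeasurable.restrict
    · rw [MeasureTheory.ae_restrict_iff' measurableSet_uIoc]
      filter_upwards with r hr
      have hr' : r ∈ Set.Icc (0:ℝ) σ := by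
        rw [Set.uIoc_of_le hs0] at hr
        exact ⟨hr.1.le, hr.2.trans hsσ⟩
      exact hp'_bdd r hr'
  -- integration by parts
  have hibp : ∫ r in (0:ℝ)..s, p r * F' r
      = p s * F s - p 0 * F 0 - ∫ r in (0:ℝ)..s, p' r * F r :=
    intervalIntegral.integral_mul_deriv_eq_deriv_mul
      (fun x hx => hp x (hsub hx)) (fun x hx => hF x (hsub hx)) hp'_int hF'_int
  -- rewrite integrand
  have hcongr : ∫ r in (0:ℝ)..s, G (w r) / τ r = ∫ r in (0:ℝ)..s, p r * F' r := by
    apply intervalIntegral.integral_congr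
    intro r hr
    have hr' := hsub hr
    have hvr := hvne r hr'
    have hτr := hτne r hr'
    have hexp : Real.exp (-r) * Real.exp r = 1 := by
      rw [← Real.exp_add]; simp
    show G (w r) / τ r = p r * F' r
    have h2 : p r * F' r = (Real.exp (-r) * Real.exp r) * (v r / v r) * (G (w r) / τ r) := by
      simp only [hp_def, hF'_def]; ring
    rw [h2, hexp, div_self hvr, one_mul, one_mul]
  have hF0 : F 0 = 0 := by simp [hF_def]
  -- bound the boundary term
  have hps : |p s| ≤ 2 / t := by
    have h1 : Real.exp (-s) ≤ 1 := Real.exp_le_one_iff.2 (by linarith)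
    have h2 : t / 2 ≤ |v s| := hv_lb s ⟨hs0, hsσ⟩
    have h3 : (0:ℝ) < t / 2 := by linarith
    rw [hp_def]
    simp only [abs_div, abs_of_pos (Real.exp_pos _)]
    rw [div_le_div_iff₀ (lt_of_lt_of_le h3 h2) ht]
    nlinarith [Real.exp_pos (-s)]
  have hFs : |F s| ≤ K := hGK s ⟨hs0, hsσ⟩
  have hbd1 : |p s * F s| ≤ 2 / t * K := by
    rw [abs_mul]
    exact mul_le_mul hps hFs (abs_nonneg _) (by positivity)
  -- bound the integral term
  have hbd2 : |∫ r in (0:ℝ)..s, p' r * F r| ≤ C' / t * K * s := by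
    have := intervalIntegral.norm_integral_le_of_norm_le_const
      (C := C' / t * K) (f := fun r => p' r * F r) (a := (0:ℝ)) (b := s) ?_
    · rw [Real.norm_eq_abs] at this
      calc |∫ r in (0:ℝ)..s, p' r * F r| ≤ C' / t * K * |s - 0| := this
        _ = C' / t * K * s := by rw [sub_zero, abs_of_nonneg hs0]
    · intro x hx
      have hx' : x ∈ Set.Icc (0:ℝ) σ := by
        rw [Set.uIoc_of_le hs0] at hx
        exact ⟨hx.1.le, hx.2.trans hsσ⟩
      rw [Real.norm_eq_abs, abs_mul]
      exact mul_le_mul (hp'_bdd x hx') (hGK x hx') (abs_nonneg _) (by positivity)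
  -- combine
  rw [hcongr, hibp, hF0, mul_zero, sub_zero]
  have hfin : |p s * F s - ∫ r in (0:ℝ)..s, p' r * F r|
      ≤ 2 / t * K + C' / t * K * s := by
    calc |p s * F s - ∫ r in (0:ℝ)..s, p' r * F r|
        ≤ |p s * F s| + |∫ r in (0:ℝ)..s, p' r * F r| := abs_sub _ _
      _ ≤ 2 / t * K + C' / t * K * s := add_le_add hbd1 hbd2
  have : C' / t * K * s ≤ C' / t * K * σ := by
    apply mul_le_mul_of_nonneg_left hsσ (by positivity)
  have heq : 2 / t * K + C' / t * K * σ = (2 + σ * C') * K / t := by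
    field_simp
  linarith
end
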